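/- arXiv:1511.00071 — 2 statements merged into one kernel-verified Lean document; each statement's English description precedes it below -/
import Mathlib

section
/- Define, for odd squarefree $d_0$ and $\Re s > 0$, $H(s) = \sum_{(d_1, 2N)=1} d_1^{-2-s} \sum_{f_1 \mid d_1} \prod_{p \mid 2f_1}\left(1 - p^{-s-1} E_1(s; p)\right)$ where $E_1(s; p) = (1+p^{-1})^{-2}(1-p^{-2s-1})^{-1}(1+p^{-1}-p^{-2s-1})$ for odd prime $p$ and $E_1(s;2)=1$. Then there exists an absolute constant $K > 0$ such that $1/3 \leq H(0) \leq K$ and $|H'(0)| \leq K$, uniformly in the odd number $N$. -/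
/-- The Euler factor `E₁(s; p)` for a prime `p`, with `E₁(s; 2) = 1`. -/
noncomputable def E1R (s : ℝ) (p : ℕ) : ℝ :=
  if p = 2 then 1 else
    ((1 + (p:ℝ)⁻¹) ^ 2)⁻¹ * (1 - (p:ℝ) ^ (-2*s-1))⁻¹ * (1 + (p:ℝ)⁻¹ - (p:ℝ) ^ (-2*s-1))

/-- The function `H(s)` (depending on `N`). -/
noncomputable def Hfun (N : ℕ) (s : ℝ) : ℝ :=
  ∑' d1 : ℕ, if d1 ≠ 0 ∧ Nat.Coprime d1 (2*N) then
    (d1:ℝ) ^ (-2-s) *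
      ∑ f1 ∈ d1.divisors, ∏ p ∈ (2*f1).primeFactors, (1 - (p:ℝ) ^ (-s-1) * E1R s p)
  else 0

open Real

theorem tau_le_two_sqrt (n : ℕ) (hn : n ≠ 0) : n.divisors.card ≤ 2 * n.sqrt := by
  classical
  have hsplit := Finset.card_filter_add_card_filter_not
    (s := n.divisors) (p := fun d => d ≤ n.sqrt)
  have hsmall : (n.divisors.filter (fun d => d ≤ n.sqrt)).card ≤ n.sqrt := by
    have hsub : n.divisors.filter (fun d => d ≤ n.sqrt) ⊆ Finset.Icc 1 n.sqrt := by
      intro d hd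
      simp only [Finset.mem_filter, Nat.mem_divisors] at hd
      exact Finset.mem_Icc.2 ⟨Nat.one_le_iff_ne_zero.2 (fun h => by
        subst h; exact hn (Nat.eq_zero_of_zero_dvd hd.1.1)), hd.2⟩
    calc _ ≤ (Finset.Icc 1 n.sqrt).card := Finset.card_le_card hsub
      _ = n.sqrt := by rw [Nat.card_Icc]; omega
  have hlarge : (n.divisors.filter (fun d => ¬ d ≤ n.sqrt)).card
      ≤ (n.divisors.filter (fun d => d ≤ n.sqrt)).card := by
    apply Finset.card_le_card_of_injOn (fun d => n / d)
    · intro d hd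
      simp only [Finset.mem_coe, Finset.coe_filter, Set.mem_setOf_eq, Finset.mem_filter, Nat.mem_divisors] at hd ⊢
      refine ⟨⟨Nat.div_dvd_of_dvd hd.1.1, hn⟩, ?_⟩
      by_contra hgt
      push_neg at hgt
      have h1 : n.sqrt + 1 ≤ n / d := hgt
      have h2 : n.sqrt + 1 ≤ d := by omega
      have h3 : d * (n / d) = n := Nat.mul_div_cancel' hd.1.1
      have h4 : n < (n.sqrt + 1) * (n.sqrt + 1) := Nat.lt_succ_sqrt n
      nlinarith [h3, h4, h1, h2]
    · intro a ha b hb hab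
      simp only [Finset.coe_filter, Set.mem_setOf_eq, Nat.mem_divisors] at ha hb
      have ha2 : n / (n / a) = a := Nat.div_div_self ha.1.1 hn
      have hb2 : n / (n / b) = b := Nat.div_div_self hb.1.1 hn
      simp only at hab
      rw [← ha2, ← hb2, hab]
  omega

lemma tau_real (d : ℕ) (hd : d ≠ 0) : (d.divisors.card : ℝ) ≤ 2 * (d:ℝ) ^ ((1:ℝ)/2) := by
  have h1 : (d.divisors.card : ℝ) ≤ 2 * (d.sqrt : ℝ) := by
    exact_mod_cast tau_le_two_sqrt d hd
  have h2 : (d.sqrt : ℝ) ≤ (d:ℝ) ^ ((1:ℝ)/2) := by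
    rw [← Real.sqrt_eq_rpow]
    rw [Real.le_sqrt (by positivity) (by positivity)]
    exact_mod_cast Nat.sqrt_le' d
  linarith

lemma log_bound (d : ℕ) (hd : d ≠ 0) : Real.log (2*(d:ℝ)) ≤ 32 * (d:ℝ) ^ ((1:ℝ)/16) := by
  have hd1 : (1:ℝ) ≤ (d:ℝ) := by exact_mod_cast Nat.one_le_iff_ne_zero.2 hd
  have hpos : (0:ℝ) < 2*(d:ℝ) := by linarith
  have h1 : Real.log (2*(d:ℝ)) = 16 * Real.log ((2*(d:ℝ)) ^ ((1:ℝ)/16)) := by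
    rw [Real.log_rpow hpos]; ring
  have h2 : Real.log ((2*(d:ℝ)) ^ ((1:ℝ)/16)) ≤ (2*(d:ℝ)) ^ ((1:ℝ)/16) := by
    have := Real.log_le_sub_one_of_pos (x := (2*(d:ℝ)) ^ ((1:ℝ)/16)) (by positivity)
    linarith
  have h3 : (2*(d:ℝ)) ^ ((1:ℝ)/16) = (2:ℝ) ^ ((1:ℝ)/16) * (d:ℝ) ^ ((1:ℝ)/16) :=
    Real.mul_rpow (by norm_num) (by positivity)
  have h4 : (2:ℝ) ^ ((1:ℝ)/16) ≤ 2 := by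
    have := Real.rpow_le_rpow_of_exponent_le (show (1:ℝ) ≤ 2 by norm_num)
      (show (1:ℝ)/16 ≤ 1 by norm_num)
    simpa using this
  have h5 : (0:ℝ) ≤ (d:ℝ) ^ ((1:ℝ)/16) := by positivity
  calc Real.log (2*(d:ℝ)) = 16 * Real.log ((2*(d:ℝ)) ^ ((1:ℝ)/16)) := h1
    _ ≤ 16 * ((2*(d:ℝ)) ^ ((1:ℝ)/16)) := by linarith
    _ = 16 * ((2:ℝ) ^ ((1:ℝ)/16) * (d:ℝ) ^ ((1:ℝ)/16)) := by rw [h3]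
    _ ≤ 16 * (2 * (d:ℝ) ^ ((1:ℝ)/16)) := by nlinarith
    _ = 32 * (d:ℝ) ^ ((1:ℝ)/16) := by ring

lemma rpow_aux1 : (2:ℝ) ≤ (3:ℝ) ^ ((7:ℝ)/8) := by
  have h : ((3:ℝ) ^ ((7:ℝ)/8)) ^ (8:ℕ) = 3 ^ (7:ℕ) := by
    rw [← Real.rpow_natCast ((3:ℝ) ^ ((7:ℝ)/8)) 8, ← Real.rpow_mul (by norm_num)]
    norm_num
  by_contra hlt
  push_neg at hlt
  have h0 : (0:ℝ) ≤ (3:ℝ) ^ ((7:ℝ)/8) := Real.rpow_nonneg (by norm_num) _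
  have := pow_lt_pow_left₀ hlt h0 (n := 8) (by norm_num)
  rw [h] at this
  norm_num at this

lemma rpow_aux2 : (2:ℝ) ≤ (3:ℝ) ^ ((15:ℝ)/16) := by
  have h : ((3:ℝ) ^ ((15:ℝ)/16)) ^ (16:ℕ) = 3 ^ (15:ℕ) := by
    rw [← Real.rpow_natCast ((3:ℝ) ^ ((15:ℝ)/16)) 16, ← Real.rpow_mul (by norm_num)]
    norm_num
  by_contra hlt
  push_neg at hlt
  have h0 : (0:ℝ) ≤ (3:ℝ) ^ ((15:ℝ)/16) := Real.rpow_nonneg (by norm_num) _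
  have := pow_lt_pow_left₀ hlt h0 (n := 16) (by norm_num)
  rw [h] at this
  norm_num at this

-- x = P^e ≤ 1/2 when P ≥ 3, e ≤ -7/8

lemma rpow_small {P e : ℝ} (hP : 3 ≤ P) (he : e ≤ -(7/8)) : P ^ e ≤ 1/2 := by
  have hP1 : (1:ℝ) ≤ P := by linarith
  have h1 : P ^ e ≤ P ^ (-(7/8) : ℝ) := Real.rpow_le_rpow_of_exponent_le hP1 he
  have h2 : P ^ (-(7/8):ℝ) = (P ^ ((7:ℝ)/8))⁻¹ := by
    rw [← Real.rpow_neg (by linarith)]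
  have h3 : (3:ℝ) ^ ((7:ℝ)/8) ≤ P ^ ((7:ℝ)/8) :=
    Real.rpow_le_rpow (by norm_num) hP (by norm_num)
  have h4 : (2:ℝ) ≤ P ^ ((7:ℝ)/8) := le_trans rpow_aux1 h3
  rw [h2] at h1
  have h5 : (P ^ ((7:ℝ)/8))⁻¹ ≤ 1/2 := by
    rw [inv_le_comm₀ (by linarith) (by norm_num)]
    linarith
  linarith


lemma rpow_small' {P e : ℝ} (hP : 3 ≤ P) (he : e ≤ -(15/16)) : P ^ e ≤ 1/2 := by
  have hP1 : (1:ℝ) ≤ P := by linarith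
  have h1 : P ^ e ≤ P ^ (-(15/16) : ℝ) := Real.rpow_le_rpow_of_exponent_le hP1 he
  have h2 : P ^ (-(15/16):ℝ) = (P ^ ((15:ℝ)/16))⁻¹ := by
    rw [← Real.rpow_neg (by linarith)]
  have h3 : (3:ℝ) ^ ((15:ℝ)/16) ≤ P ^ ((15:ℝ)/16) :=
    Real.rpow_le_rpow (by norm_num) hP (by norm_num)
  have h4 : (2:ℝ) ≤ P ^ ((15:ℝ)/16) := le_trans rpow_aux2 h3
  rw [h2] at h1
  have h5 : (P ^ ((15:ℝ)/16))⁻¹ ≤ 1/2 := by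
    rw [inv_le_comm₀ (by linarith) (by norm_num)]
    linarith
  linarith

lemma mul_le_of_le {a b a' b' : ℝ} (ha0 : 0 ≤ a) (hb0 : 0 ≤ b) (ha : a ≤ a') (hb : b ≤ b') :
    a * b ≤ a' * b' := mul_le_mul ha hb hb0 (ha0.trans ha)

lemma Dbound {y L A iv c x : ℝ} (hx0 : 0 < x) (hxh : x ≤ 1/2) (hy0 : 0 < y) (hyh : y ≤ 1/2)
    (hc0 : 0 < c) (hc3 : c ≤ 1/3) (hA0 : 0 < A) (hA1 : A ≤ 1) (hiv0 : 0 < iv) (hiv2 : iv ≤ 2)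
    (hL0 : 0 ≤ L) :
    |L * (y*A*(iv*(1+c-x)) + y*A*(2*x*iv^2*(1+c-x)) - y*A*(2*x*iv))| ≤ 10 * L := by
  have h1 : 0 ≤ 1 + c - x := by linarith
  have h2 : 1 + c - x ≤ 4/3 := by linarith
  have hyA : y * A ≤ (1/2) * 1 := mul_le_of_le hy0.le hA0.le hyh hA1
  have hyA0 : 0 ≤ y * A := by positivity
  have hiv4 : iv^2 ≤ 4 := by nlinarith
  have hT1 : y*A*(iv*(1+c-x)) ≤ 4/3 := by
    have h := mul_le_of_le hyA0 (by positivity) hyA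
      (mul_le_of_le hiv0.le h1 hiv2 h2 : iv*(1+c-x) ≤ 2*(4/3))
    linarith
  have hT2 : y*A*(2*x*iv^2*(1+c-x)) ≤ 8/3 := by
    have hin : 2*x*iv^2*(1+c-x) ≤ (1*4)*(4/3) := by
      apply mul_le_of_le (by positivity) h1 _ h2
      exact mul_le_of_le (by positivity) (by positivity) (by linarith) hiv4
    have h := mul_le_of_le hyA0 (by positivity) hyA hin
    linarith
  have hT3 : y*A*(2*x*iv) ≤ 2 := by
    have hin : 2*x*iv ≤ 1*2 := mul_le_of_le (by positivity) hiv0.le (by linarith) hiv2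
    have h := mul_le_of_le hyA0 (by positivity) hyA hin
    linarith
  have hT10 : 0 ≤ y*A*(iv*(1+c-x)) := by positivity
  have hT20 : 0 ≤ y*A*(2*x*iv^2*(1+c-x)) := by positivity
  have hT30 : 0 ≤ y*A*(2*x*iv) := by positivity
  rw [abs_mul, abs_of_nonneg hL0]
  have h10 : |y*A*(iv*(1+c-x)) + y*A*(2*x*iv^2*(1+c-x)) - y*A*(2*x*iv)| ≤ 10 := by
    rw [abs_le]; constructor <;> nlinarith
  nlinarith [abs_nonneg (y*A*(iv*(1+c-x)) + y*A*(2*x*iv^2*(1+c-x)) - y*A*(2*x*iv))]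

lemma E1_le_two {A iv c x : ℝ} (hA0 : 0 < A) (hiv0 : 0 < iv) (hAeq : A * (1+c)^2 = 1)
    (hiveq : iv * (1 - x) = 1) (hc0 : 0 < c) (hxh : x ≤ 1/2) : A * iv * (1+c-x) ≤ 2 := by
  have key : (1+c-x) ≤ 2 * ((1+c)^2 * (1-x)) := by nlinarith [sq_nonneg c]
  calc A * iv * (1+c-x) ≤ A * iv * (2 * ((1+c)^2*(1-x))) := by
        apply mul_le_mul_of_nonneg_left key (by positivity)
    _ = 2 * ((A * (1+c)^2) * (iv * (1-x))) := by ring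
    _ = 2 := by rw [hAeq, hiveq]; ring

noncomputable def gfun (p : ℕ) (t : ℝ) : ℝ := 1 - (p:ℝ) ^ (-t-1) * E1R t p

lemma gfun_key (p : ℕ) (hp : p.Prime) (s : ℝ) (hs1 : -(1/16) ≤ s) (hs2 : s ≤ 1/16) :
    DifferentiableAt ℝ (gfun p) s ∧ |deriv (gfun p) s| ≤ 10 * Real.log p ∧
      0 ≤ gfun p s ∧ gfun p s ≤ 1 := by
  have hL0 : 0 ≤ Real.log p := Real.log_nonneg (by exact_mod_cast hp.one_lt.le)
  by_cases hp2 : p = 2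
  · subst hp2
    have hfun : gfun 2 = fun t => 1 - (2:ℝ) ^ (-t-1) := by
      funext t; simp [gfun, E1R]
    have hin : HasDerivAt (fun t : ℝ => -t-1) (-1) s := by
      simpa using (hasDerivAt_id s).neg.sub_const 1
    have hyD : HasDerivAt (fun t : ℝ => (2:ℝ) ^ (-t-1)) ((2:ℝ) ^ (-s-1) * Real.log 2 * (-1)) s :=
      (Real.hasStrictDerivAt_const_rpow (by norm_num) (-s-1)).hasDerivAt.comp s hin
    have hD : HasDerivAt (gfun 2) (-((2:ℝ) ^ (-s-1) * Real.log 2 * (-1))) s := by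
      rw [hfun]; exact hyD.const_sub 1
    have hy1 : (2:ℝ) ^ (-s-1) ≤ 1 :=
      Real.rpow_le_one_of_one_le_of_nonpos (by norm_num) (by linarith)
    have hy0 : (0:ℝ) < (2:ℝ) ^ (-s-1) := Real.rpow_pos_of_pos (by norm_num) _
    refine ⟨hD.differentiableAt, ?_, ?_, ?_⟩
    · rw [hD.deriv]
      have hL0' : (0:ℝ) ≤ Real.log 2 := Real.log_nonneg (by norm_num)
      have hvaleq : -((2:ℝ) ^ (-s-1) * Real.log 2 * (-1)) = (2:ℝ)^(-s-1) * Real.log 2 := by ring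
      rw [hvaleq, abs_of_nonneg (by positivity)]
      push_cast
      nlinarith [hy1, hL0']
    · rw [hfun]; dsimp only; linarith
    · rw [hfun]; dsimp only; linarith
  · -- p odd prime, p ≥ 3
    have hp3 : 3 ≤ p := by have := hp.two_le; omega
    have hP3 : (3:ℝ) ≤ (p:ℝ) := by exact_mod_cast hp3
    have hP0 : (0:ℝ) < (p:ℝ) := by linarith
    obtain ⟨L, hLdef⟩ : ∃ v, v = Real.log p := ⟨_, rfl⟩
    obtain ⟨x, hxdef⟩ : ∃ v, v = (p:ℝ) ^ (-2*s-1) := ⟨_, rfl⟩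
    obtain ⟨y, hydef⟩ : ∃ v, v = (p:ℝ) ^ (-s-1) := ⟨_, rfl⟩
    obtain ⟨c, hcdef⟩ : ∃ v, v = (p:ℝ)⁻¹ := ⟨_, rfl⟩
    obtain ⟨A, hAdef⟩ : ∃ v, v = ((1 + c) ^ 2)⁻¹ := ⟨_, rfl⟩
    have hx0 : 0 < x := hxdef ▸ Real.rpow_pos_of_pos hP0 _
    have hxh : x ≤ 1/2 := hxdef ▸ rpow_small hP3 (by linarith)
    have hy0 : 0 < y := hydef ▸ Real.rpow_pos_of_pos hP0 _
    have hyh : y ≤ 1/2 := hydef ▸ rpow_small' hP3 (by linarith)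
    have hc0 : 0 < c := by rw [hcdef]; positivity
    have hc3 : c ≤ 1/3 := by
      rw [hcdef, inv_le_comm₀ hP0 (by norm_num)]
      norm_num; linarith
    have hA0 : 0 < A := by rw [hAdef]; positivity
    have hA1 : A ≤ 1 := by
      rw [hAdef, inv_le_one_iff₀]; right; nlinarith
    have hAeq : A * (1+c)^2 = 1 := by
      rw [hAdef]; field_simp
    obtain ⟨w, hwdef⟩ : ∃ v, v = 1 - x := ⟨_, rfl⟩
    have hw0 : (0:ℝ) < w := by rw [hwdef]; linarith
    have hwne : w ≠ 0 := ne_of_gt hw0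
    obtain ⟨iv, hivdef⟩ : ∃ v, v = w⁻¹ := ⟨_, rfl⟩
    have hiv0 : 0 < iv := by rw [hivdef]; positivity
    have hiv2 : iv ≤ 2 := by
      rw [hivdef, inv_le_comm₀ hw0 (by norm_num), hwdef]; linarith
    have hiveq : iv * (1 - x) = 1 := by
      rw [hivdef, hwdef.symm]; exact inv_mul_cancel₀ hwne
    -- derivatives
    have hinx : HasDerivAt (fun t : ℝ => -2*t-1) (-2) s := by
      simpa using ((hasDerivAt_id s).const_mul (-2:ℝ)).sub_const 1
    have hxD : HasDerivAt (fun t : ℝ => (p:ℝ) ^ (-2*t-1)) (-2*x*L) s := by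
      have h := (Real.hasStrictDerivAt_const_rpow hP0 (-2*s-1)).hasDerivAt.comp s hinx
      refine h.congr_deriv ?_
      rw [hxdef, hLdef]; ring
    have hiny : HasDerivAt (fun t : ℝ => -t-1) (-1) s := by
      simpa using (hasDerivAt_id s).neg.sub_const 1
    have hyD : HasDerivAt (fun t : ℝ => (p:ℝ) ^ (-t-1)) (-(y*L)) s := by
      have h := (Real.hasStrictDerivAt_const_rpow hP0 (-s-1)).hasDerivAt.comp s hiny
      refine h.congr_deriv ?_
      rw [hydef, hLdef]; ring
    have hwD : HasDerivAt (fun t : ℝ => 1 - (p:ℝ) ^ (-2*t-1)) (2*x*L) s := by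
      have h := hxD.const_sub 1
      refine h.congr_deriv ?_; ring
    have hne : (1 : ℝ) - (p:ℝ) ^ (-2*s-1) ≠ 0 := by
      rw [← hxdef, ← hwdef]; exact hwne
    have hinvD : HasDerivAt (fun t : ℝ => (1 - (p:ℝ) ^ (-2*t-1))⁻¹) (-(2*x*L) * iv^2) s := by
      have h := hwD.inv hne
      refine h.congr_deriv ?_
      rw [hivdef, hwdef, hxdef]
      rw [div_eq_mul_inv, inv_pow]
    have hm1 : HasDerivAt (fun t : ℝ => A * (1 - (p:ℝ) ^ (-2*t-1))⁻¹) (A * (-(2*x*L) * iv^2)) s :=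
      hinvD.const_mul A
    have hg2 : HasDerivAt (fun t : ℝ => 1 + c - (p:ℝ) ^ (-2*t-1)) (2*x*L) s := by
      have h := hxD.const_sub (1 + c)
      refine h.congr_deriv ?_; ring
    have hEfun : (fun t => E1R t p) = fun t =>
        A * (1 - (p:ℝ) ^ (-2*t-1))⁻¹ * (1 + c - (p:ℝ) ^ (-2*t-1)) := by
      rw [hAdef, hcdef]
      funext t; simp only [E1R, if_neg hp2]
    have hE1D : HasDerivAt (fun t => E1R t p)
        ((A * (-(2*x*L) * iv^2)) * (1 + c - x) + (A * iv) * (2*x*L)) s := by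
      rw [hEfun]
      have h := hm1.mul hg2
      refine h.congr_deriv ?_
      rw [hxdef, hivdef, hwdef, hxdef]
    have hval : E1R s p = A * iv * (1 + c - x) := by
      rw [hAdef, hcdef, hivdef, hwdef, hxdef]
      simp only [E1R, if_neg hp2]
    have hD : HasDerivAt (gfun p)
        (L * (y*A*(iv*(1+c-x)) + y*A*(2*x*iv^2*(1+c-x)) - y*A*(2*x*iv))) s := by
      have h0 := (hyD.mul hE1D).const_sub 1
      have h1 : HasDerivAt (gfun p)
          (-(-(y*L) * E1R s p + (p:ℝ) ^ (-s-1) * ((A * (-(2*x*L) * iv^2)) * (1 + c - x) + (A * iv) * (2*x*L)))) s := h0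
      convert h1 using 1
      rw [hval, ← hydef]
      ring
    have hgval : gfun p s = 1 - y * E1R s p := by
      rw [hydef]; rfl
    have hE1pos : 0 < E1R s p := by
      rw [hval]
      have h1 : 0 < 1 + c - x := by linarith
      positivity
    have hE1le : E1R s p ≤ 2 := by
      rw [hval]; exact E1_le_two hA0 hiv0 hAeq hiveq hc0 hxh
    refine ⟨hD.differentiableAt, ?_, ?_, ?_⟩
    · rw [hD.deriv, ← hLdef]
      exact Dbound hx0 hxh hy0 hyh hc0 hc3 hA0 hA1 hiv0 hiv2 (hLdef ▸ hL0)
    · rw [hgval]; nlinarith [hE1le, hy0, hyh]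
    · rw [hgval]; nlinarith [hE1pos, hy0]

lemma prod_key (m : ℕ) (hm : m ≠ 0) (s : ℝ) (hs1 : -(1/16) ≤ s) (hs2 : s ≤ 1/16) :
    DifferentiableAt ℝ (fun t => ∏ p ∈ m.primeFactors, gfun p t) s ∧
    |deriv (fun t => ∏ p ∈ m.primeFactors, gfun p t) s| ≤ 10 * Real.log m ∧
    0 ≤ ∏ p ∈ m.primeFactors, gfun p s ∧ (∏ p ∈ m.primeFactors, gfun p s) ≤ 1 := by
  classical
  have hprime : ∀ p ∈ m.primeFactors, p.Prime := fun p hp => Nat.prime_of_mem_primeFactors hp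
  have hkey := fun p (hp : p ∈ m.primeFactors) => gfun_key p (hprime p hp) s hs1 hs2
  have hD : HasDerivAt (fun t => ∏ p ∈ m.primeFactors, gfun p t)
      (∑ p ∈ m.primeFactors, (∏ q ∈ m.primeFactors.erase p, gfun q s) • deriv (gfun p) s) s :=
    HasDerivAt.fun_finsetProd (fun p hp => (hkey p hp).1.hasDerivAt)
  have hm1 : (1:ℝ) ≤ (m:ℝ) := by
    have : 1 ≤ m := Nat.one_le_iff_ne_zero.2 hm
    exact_mod_cast this
  refine ⟨hD.differentiableAt, ?_, ?_, ?_⟩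
  · rw [hD.deriv]
    have hstep : ∀ p ∈ m.primeFactors,
        |(∏ q ∈ m.primeFactors.erase p, gfun q s) • deriv (gfun p) s| ≤ 10 * Real.log p := by
      intro p hp
      rw [smul_eq_mul, abs_mul]
      have h1 : |∏ q ∈ m.primeFactors.erase p, gfun q s| ≤ 1 := by
        rw [Finset.abs_prod]
        apply Finset.prod_le_one (fun q _ => abs_nonneg _)
        intro q hq
        have hq' := Finset.mem_of_mem_erase hq
        rw [abs_of_nonneg (hkey q hq').2.2.1]
        exact (hkey q hq').2.2.2
      have h2 : |deriv (gfun p) s| ≤ 10 * Real.log p := (hkey p hp).2.1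
      calc |∏ q ∈ m.primeFactors.erase p, gfun q s| * |deriv (gfun p) s|
          ≤ 1 * (10 * Real.log p) := by
            apply mul_le_mul h1 h2 (abs_nonneg _) (by norm_num)
        _ = 10 * Real.log p := by ring
    calc |∑ p ∈ m.primeFactors, (∏ q ∈ m.primeFactors.erase p, gfun q s) • deriv (gfun p) s|
        ≤ ∑ p ∈ m.primeFactors, |(∏ q ∈ m.primeFactors.erase p, gfun q s) • deriv (gfun p) s| :=
          Finset.abs_sum_le_sum_abs _ _
      _ ≤ ∑ p ∈ m.primeFactors, 10 * Real.log p := Finset.sum_le_sum hstep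
      _ = 10 * ∑ p ∈ m.primeFactors, Real.log p := by rw [Finset.mul_sum]
      _ ≤ 10 * Real.log m := by
          have hlogeq : Real.log (((∏ p ∈ m.primeFactors, p) : ℕ) : ℝ)
              = ∑ p ∈ m.primeFactors, Real.log p := by
            rw [Nat.cast_prod, Real.log_prod
              (fun p hp => by exact_mod_cast (hprime p hp).pos.ne')]
          rw [← hlogeq]
          have hdvd : (∏ p ∈ m.primeFactors, p) ∣ m := Nat.prod_primeFactors_dvd m
          have hle : (((∏ p ∈ m.primeFactors, p) : ℕ) : ℝ) ≤ (m : ℝ) := by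
            exact_mod_cast Nat.le_of_dvd (Nat.pos_of_ne_zero hm) hdvd
          have hpos : (0:ℝ) < (((∏ p ∈ m.primeFactors, p) : ℕ) : ℝ) := by
            have : 0 < (∏ p ∈ m.primeFactors, p) := Nat.pos_of_ne_zero (by
              intro h
              exact absurd (h ▸ hdvd) (by simpa using hm))
            exact_mod_cast this
          have := Real.log_le_log hpos hle
          linarith [Real.log_nonneg hm1]
  · exact Finset.prod_nonneg (fun p hp => (hkey p hp).2.2.1)
  · exact Finset.prod_le_one (fun p hp => (hkey p hp).2.2.1) (fun p hp => (hkey p hp).2.2.2)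

noncomputable def Ffun (N d : ℕ) (s : ℝ) : ℝ :=
  if d ≠ 0 ∧ Nat.Coprime d (2*N) then
    (d:ℝ) ^ (-2-s) * ∑ f ∈ d.divisors, ∏ p ∈ (2*f).primeFactors, gfun p s
  else 0

lemma Ffun_key (N d : ℕ) (s : ℝ) (hs1 : -(1/16) ≤ s) (hs2 : s ≤ 1/16) :
    DifferentiableAt ℝ (Ffun N d) s ∧ |deriv (Ffun N d) s| ≤ 704 * (d:ℝ) ^ (-(11:ℝ)/8) ∧
      0 ≤ Ffun N d s ∧ Ffun N d s ≤ 704 * (d:ℝ) ^ (-(11:ℝ)/8) := by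
  classical
  by_cases hcond : d ≠ 0 ∧ Nat.Coprime d (2*N)
  case neg =>
    have hfun : Ffun N d = fun _ => 0 := by
      funext t; rw [Ffun, if_neg hcond]
    rw [hfun]
    refine ⟨differentiableAt_const 0, ?_, le_refl 0, by positivity⟩
    rw [deriv_const]
    simp only [abs_zero]
    positivity
  case pos =>
    obtain ⟨hd0, hcop⟩ := hcond
    have hd1 : (1:ℝ) ≤ (d:ℝ) := by exact_mod_cast Nat.one_le_iff_ne_zero.2 hd0
    have hdpos : (0:ℝ) < (d:ℝ) := by linarith
    have hfun : Ffun N d = fun t =>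
        (d:ℝ) ^ (-2-t) * ∑ f ∈ d.divisors, ∏ p ∈ (2*f).primeFactors, gfun p t := by
      funext t; rw [Ffun, if_pos ⟨hd0, hcop⟩]
    -- basic facts about divisors
    have hfne : ∀ f ∈ d.divisors, 2*f ≠ 0 := by
      intro f hf
      have := Nat.pos_of_mem_divisors hf
      omega
    have hfle : ∀ f ∈ d.divisors, (f:ℝ) ≤ (d:ℝ) := by
      intro f hf
      exact_mod_cast Nat.divisor_le hf
    have hkey := fun f (hf : f ∈ d.divisors) => prod_key (2*f) (hfne f hf) s hs1 hs2
    -- derivative of the rpow factor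
    have hain : HasDerivAt (fun t : ℝ => -2-t) (-1) s := by
      simpa using (hasDerivAt_id s).const_sub (-2:ℝ)
    have haD : HasDerivAt (fun t : ℝ => (d:ℝ) ^ (-2-t))
        ((d:ℝ) ^ (-2-s) * Real.log d * (-1)) s :=
      (Real.hasStrictDerivAt_const_rpow hdpos (-2-s)).hasDerivAt.comp s hain
    have hBD : HasDerivAt (fun t => ∑ f ∈ d.divisors, ∏ p ∈ (2*f).primeFactors, gfun p t)
        (∑ f ∈ d.divisors, deriv (fun t => ∏ p ∈ (2*f).primeFactors, gfun p t) s) s :=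
      HasDerivAt.fun_sum (fun f hf => (hkey f hf).1.hasDerivAt)
    have hD : HasDerivAt (Ffun N d)
        ((d:ℝ) ^ (-2-s) * Real.log d * (-1) *
            (∑ f ∈ d.divisors, ∏ p ∈ (2*f).primeFactors, gfun p s) +
          (d:ℝ) ^ (-2-s) *
            (∑ f ∈ d.divisors, deriv (fun t => ∏ p ∈ (2*f).primeFactors, gfun p t) s)) s := by
      rw [hfun]; exact haD.mul hBD
    -- bounds
    set τ : ℝ := (d.divisors.card : ℝ) with hτdef
    have hτ0 : 0 ≤ τ := by positivity
    have hB0 : 0 ≤ ∑ f ∈ d.divisors, ∏ p ∈ (2*f).primeFactors, gfun p s :=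
      Finset.sum_nonneg (fun f hf => (hkey f hf).2.2.1)
    have hBle : (∑ f ∈ d.divisors, ∏ p ∈ (2*f).primeFactors, gfun p s) ≤ τ := by
      rw [hτdef]
      calc (∑ f ∈ d.divisors, ∏ p ∈ (2*f).primeFactors, gfun p s)
          ≤ ∑ _f ∈ d.divisors, (1:ℝ) := Finset.sum_le_sum (fun f hf => (hkey f hf).2.2.2)
        _ = (d.divisors.card : ℝ) := by simp
    have hlog2d0 : 0 ≤ Real.log (2*(d:ℝ)) := Real.log_nonneg (by linarith)
    have hB'le : |∑ f ∈ d.divisors, deriv (fun t => ∏ p ∈ (2*f).primeFactors, gfun p t) s|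
        ≤ τ * (10 * Real.log (2*(d:ℝ))) := by
      calc |∑ f ∈ d.divisors, deriv (fun t => ∏ p ∈ (2*f).primeFactors, gfun p t) s|
          ≤ ∑ f ∈ d.divisors, |deriv (fun t => ∏ p ∈ (2*f).primeFactors, gfun p t) s| :=
            Finset.abs_sum_le_sum_abs _ _
        _ ≤ ∑ _f ∈ d.divisors, 10 * Real.log (2*(d:ℝ)) := by
            apply Finset.sum_le_sum
            intro f hf
            have h1 := (hkey f hf).2.1
            have h2 : Real.log ((2*f : ℕ) : ℝ) ≤ Real.log (2*(d:ℝ)) := by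
              apply Real.log_le_log (by exact_mod_cast Nat.pos_of_ne_zero (hfne f hf))
              push_cast
              have := hfle f hf
              linarith
            linarith
        _ = τ * (10 * Real.log (2*(d:ℝ))) := by
            rw [Finset.sum_const, nsmul_eq_mul, hτdef]
    have ha_le : (d:ℝ) ^ (-2-s) ≤ (d:ℝ) ^ (-(31:ℝ)/16) :=
      Real.rpow_le_rpow_of_exponent_le hd1 (by linarith)
    have ha0 : (0:ℝ) < (d:ℝ) ^ (-2-s) := Real.rpow_pos_of_pos hdpos _
    have hlogd0 : 0 ≤ Real.log d := Real.log_nonneg hd1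
    have hlogdle : Real.log d ≤ Real.log (2*(d:ℝ)) := by
      apply Real.log_le_log hdpos; linarith
    -- numeric combination
    have hτb : τ ≤ 2 * (d:ℝ) ^ ((1:ℝ)/2) := tau_real d hd0
    have hlogb : Real.log (2*(d:ℝ)) ≤ 32 * (d:ℝ) ^ ((1:ℝ)/16) := log_bound d hd0
    have hcomb : (d:ℝ) ^ (-(31:ℝ)/16) * ((d:ℝ) ^ ((1:ℝ)/2) * (d:ℝ) ^ ((1:ℝ)/16))
        = (d:ℝ) ^ (-(11:ℝ)/8) := by
      rw [← Real.rpow_add hdpos, ← Real.rpow_add hdpos]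
      norm_num
    have hrp0 : (0:ℝ) ≤ (d:ℝ) ^ ((1:ℝ)/2) := by positivity
    have hrp1 : (0:ℝ) ≤ (d:ℝ) ^ ((1:ℝ)/16) := by positivity
    have hrp2 : (0:ℝ) ≤ (d:ℝ) ^ (-(31:ℝ)/16) := by positivity
    refine ⟨hD.differentiableAt, ?_, ?_, ?_⟩
    · rw [hD.deriv]
      have step1 : |(d:ℝ) ^ (-2-s) * Real.log d * (-1) *
            (∑ f ∈ d.divisors, ∏ p ∈ (2*f).primeFactors, gfun p s) +
          (d:ℝ) ^ (-2-s) *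
            (∑ f ∈ d.divisors, deriv (fun t => ∏ p ∈ (2*f).primeFactors, gfun p t) s)|
          ≤ (d:ℝ) ^ (-2-s) * Real.log d * τ + (d:ℝ) ^ (-2-s) * (τ * (10 * Real.log (2*(d:ℝ)))) := by
        apply (abs_add_le _ _).trans
        apply add_le_add
        · rw [abs_mul, abs_mul, abs_mul]
          rw [abs_of_nonneg ha0.le, abs_of_nonneg hlogd0, abs_of_nonneg hB0]
          simp only [abs_neg, abs_one, mul_one]
          apply mul_le_mul_of_nonneg_left hBle (by positivity)
        · rw [abs_mul, abs_of_nonneg ha0.le]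
          apply mul_le_mul_of_nonneg_left hB'le ha0.le
      apply step1.trans
      have step2 : (d:ℝ) ^ (-2-s) * Real.log d * τ + (d:ℝ) ^ (-2-s) * (τ * (10 * Real.log (2*(d:ℝ))))
          ≤ (d:ℝ) ^ (-(31:ℝ)/16) * (11 * Real.log (2*(d:ℝ))) * τ := by
        nlinarith [mul_nonneg hτ0 hlog2d0, mul_nonneg ha0.le hτ0,
          mul_le_mul_of_nonneg_right ha_le (mul_nonneg hτ0 hlog2d0),
          mul_le_mul_of_nonneg_right hlogdle (mul_nonneg ha0.le hτ0)]
      apply step2.trans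
      calc (d:ℝ) ^ (-(31:ℝ)/16) * (11 * Real.log (2*(d:ℝ))) * τ
          ≤ (d:ℝ) ^ (-(31:ℝ)/16) * (11 * (32 * (d:ℝ) ^ ((1:ℝ)/16))) * (2 * (d:ℝ) ^ ((1:ℝ)/2)) := by
            apply mul_le_mul
            · apply mul_le_mul_of_nonneg_left _ hrp2
              linarith
            · exact hτb
            · exact hτ0
            · positivity
        _ = 704 * ((d:ℝ) ^ (-(31:ℝ)/16) * ((d:ℝ) ^ ((1:ℝ)/2) * (d:ℝ) ^ ((1:ℝ)/16))) := by ring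
        _ = 704 * (d:ℝ) ^ (-(11:ℝ)/8) := by rw [hcomb]
    · rw [hfun]
      positivity
    · rw [hfun]
      dsimp only
      calc (d:ℝ) ^ (-2-s) * (∑ f ∈ d.divisors, ∏ p ∈ (2*f).primeFactors, gfun p s)
          ≤ (d:ℝ) ^ (-(31:ℝ)/16) * (2 * (d:ℝ) ^ ((1:ℝ)/2)) := by
            apply mul_le_mul ha_le (hBle.trans hτb) hB0 hrp2
        _ = 2 * ((d:ℝ) ^ (-(31:ℝ)/16) * (d:ℝ) ^ ((1:ℝ)/2)) := by ring
        _ = 2 * (d:ℝ) ^ (-(23:ℝ)/16) := by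
            rw [← Real.rpow_add hdpos]; norm_num
        _ ≤ 704 * (d:ℝ) ^ (-(11:ℝ)/8) := by
            have h1 : (d:ℝ) ^ (-(23:ℝ)/16) ≤ (d:ℝ) ^ (-(11:ℝ)/8) :=
              Real.rpow_le_rpow_of_exponent_le hd1 (by norm_num)
            have h2 : (0:ℝ) ≤ (d:ℝ) ^ (-(23:ℝ)/16) := by positivity
            nlinarith

theorem Hfun_bounds : ∃ K > (0:ℝ), ∀ N : ℕ, Odd N →
    1/3 ≤ Hfun N 0 ∧ Hfun N 0 ≤ K ∧ |deriv (Hfun N) 0| ≤ K := by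
  classical
  set u : ℕ → ℝ := fun d => 704 * (d:ℝ) ^ (-(11:ℝ)/8) with hudef
  have hu : Summable u :=
    (Real.summable_nat_rpow.2 (by norm_num)).mul_left 704
  have hu0 : ∀ d, 0 ≤ u d := fun d => by rw [hudef]; positivity
  have htsum0 : 0 ≤ ∑' d, u d := tsum_nonneg hu0
  refine ⟨1 + ∑' d, u d, by linarith, ?_⟩
  intro N _hN
  have hmem : (0:ℝ) ∈ Set.Ioo (-(1/16:ℝ)) (1/16) := by constructor <;> norm_num
  have hkeyI : ∀ (d : ℕ) (y : ℝ), y ∈ Set.Ioo (-(1/16:ℝ)) (1/16) →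
      DifferentiableAt ℝ (Ffun N d) y ∧ |deriv (Ffun N d) y| ≤ u d ∧
        0 ≤ Ffun N d y ∧ Ffun N d y ≤ u d := by
    intro d y hy
    exact Ffun_key N d y hy.1.le hy.2.le
  have hkey0 := fun d => hkeyI d 0 hmem
  -- summability at 0
  have hg0 : Summable (fun d => Ffun N d 0) := by
    apply Summable.of_norm_bounded hu
    intro d
    rw [Real.norm_eq_abs, abs_of_nonneg (hkey0 d).2.2.1]
    exact (hkey0 d).2.2.2
  have hHeq : Hfun N = fun s => ∑' d, Ffun N d s := rfl
  -- the derivative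
  have hHD : HasDerivAt (Hfun N) (∑' d, deriv (Ffun N d) 0) 0 := by
    rw [hHeq]
    exact hasDerivAt_tsum_of_isPreconnected hu isOpen_Ioo isPreconnected_Ioo
      (fun d y hy => ((hkeyI d y hy).1).hasDerivAt)
      (fun d y hy => by
        rw [Real.norm_eq_abs]; exact (hkeyI d y hy).2.1)
      hmem hg0 hmem
  have hsumabs : Summable (fun d => |deriv (Ffun N d) 0|) :=
    Summable.of_nonneg_of_le (fun d => abs_nonneg _) (fun d => (hkey0 d).2.1) hu
  constructor
  · -- lower bound
    have hterm : Ffun N 1 0 = 1/2 := by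
      rw [Ffun, if_pos ⟨one_ne_zero, Nat.coprime_one_left _⟩]
      rw [Nat.divisors_one]
      rw [Finset.sum_singleton]
      have h2 : (2*1 : ℕ).primeFactors = {2} := by
        norm_num [Nat.Prime.primeFactors Nat.prime_two]
      rw [h2, Finset.prod_singleton]
      have hg2 : gfun 2 0 = 1 - (2:ℝ) ^ (-(0:ℝ)-1) := by
        simp [gfun, E1R]
      rw [hg2]
      have : ((2:ℝ) ^ (-(0:ℝ)-1)) = 1/2 := by
        rw [show (-(0:ℝ)-1) = ((-1 : ℤ) : ℝ) by norm_num, Real.rpow_intCast]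
        norm_num
      rw [this]
      rw [Nat.cast_one, Real.one_rpow]
      norm_num
    have hle := hg0.le_tsum 1 (fun j _ => (hkey0 j).2.2.1)
    have : Hfun N 0 = ∑' d, Ffun N d 0 := by rw [hHeq]
    rw [this]
    rw [hterm] at hle
    linarith
  constructor
  · -- upper bound
    have : Hfun N 0 = ∑' d, Ffun N d 0 := by rw [hHeq]
    rw [this]
    have := hg0.tsum_le_tsum (fun d => (hkey0 d).2.2.2) hu
    linarith
  · -- derivative bound
    rw [hHD.deriv]
    have h1 : |∑' d, deriv (Ffun N d) 0| ≤ ∑' d, |deriv (Ffun N d) 0| := by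
      have := norm_tsum_le_tsum_norm (f := fun d => deriv (Ffun N d) 0)
        (by simpa [Real.norm_eq_abs] using hsumabs)
      simpa [Real.norm_eq_abs] using this
    have h2 : (∑' d, |deriv (Ffun N d) 0|) ≤ ∑' d, u d :=
      hsumabs.tsum_le_tsum (fun d => (hkey0 d).2.1) hu
    linarith
end

section
/- Suppose that for each squarefree odd $m \leq P$ and squarefree odd $n \leq Q$ one has complex numbers satisfying the large sieve inequality $\sum^*_{m \leq P}\left|\sum^*_{n \leq Q} a_n \left(\frac{n}{m}\right)\right|^2 \ll_\varepsilon (PQ)^\varepsilon (P + Q) \sum^*_{n\leq Q}|a_n|^2$ (Heath-Brown's quadratic large sieve). Then for any sequences $(a_m), (b_n)$ of complex numbers with $|a_m| \leq m^{-1/2+\varepsilon}$ and $|b_n| \leq n^{-1/2+\varepsilon}$, and writing $n = n_0 n_1^2$ with $n_0$ squarefree, one has $\left|\sum_{m \leq P,\, m \text{ odd}}\sum_{n \leq Q,\, n \text{ odd}} a_m b_n \left(\frac{n_0}{m}\right)\right| \ll_\varepsilon (PQ)^\varepsilon (P + Q)^{1/2 + \varepsilon}$, uniformly in $P, Q > 0$.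 -/
open scoped Classical in
/-- The set of odd squarefree integers in `[1, P]`. -/
noncomputable def oddSqfree (P : ℕ) : Finset ℕ :=
  (Finset.Icc 1 P).filter (fun m => m % 2 = 1 ∧ Squarefree m)

/-- The squarefree kernel `n₀` in the decomposition `n = n₀ n₁²`. -/
def sqfKernel (n : ℕ) : ℕ := ∏ p ∈ n.primeFactors, p ^ (n.factorization p % 2)

def sqrtPart (n : ℕ) : ℕ := ∏ p ∈ n.primeFactors, p ^ (n.factorization p / 2)

lemma sqfKernel_pos (n : ℕ) : 0 < sqfKernel n :=
  Finset.prod_pos fun p hp => pow_pos (Nat.prime_of_mem_primeFactors hp).pos _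

lemma sqrtPart_pos (n : ℕ) : 0 < sqrtPart n :=
  Finset.prod_pos fun p hp => pow_pos (Nat.prime_of_mem_primeFactors hp).pos _

lemma sqfKernel_mul_sqrtPart_sq {n : ℕ} (hn : n ≠ 0) : sqfKernel n * sqrtPart n ^ 2 = n := by
  unfold sqfKernel sqrtPart
  rw [← Finset.prod_pow, ← Finset.prod_mul_distrib]
  have h : ∀ p ∈ n.primeFactors,
      p ^ (n.factorization p % 2) * (p ^ (n.factorization p / 2)) ^ 2 = p ^ n.factorization p := by
    intro p _
    rw [← pow_mul, ← pow_add, Nat.mod_add_div']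
  rw [Finset.prod_congr rfl h]
  exact Nat.factorization_prod_pow_eq_self hn

lemma squarefree_sqfKernel (n : ℕ) : Squarefree (sqfKernel n) := by
  apply Nat.squarefree_of_factorization_le_one (sqfKernel_pos n).ne'
  intro q
  unfold sqfKernel
  rw [Nat.factorization_prod (fun p hp => pow_ne_zero _ (Nat.prime_of_mem_primeFactors hp).pos.ne')]
  rw [Finsupp.finset_sum_apply]
  have h : ∀ p ∈ n.primeFactors,
      ((p ^ (n.factorization p % 2)).factorization) q
        = if p = q then n.factorization p % 2 else 0 := by
    intro p hp
    rw [Nat.Prime.factorization_pow (Nat.prime_of_mem_primeFactors hp), Finsupp.single_apply]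
  rw [Finset.sum_congr rfl h, Finset.sum_ite_eq' n.primeFactors q
    (fun p => n.factorization p % 2)]
  split_ifs
  · exact Nat.le_of_lt_succ (Nat.mod_lt _ (by norm_num))
  · exact Nat.zero_le 1

lemma prod_PF_pow_factorization {N m : ℕ} (hm : m ≠ 0) (hsub : m.primeFactors ⊆ N.primeFactors) :
    ∏ p ∈ N.primeFactors, p ^ (m.factorization p) = m := by
  have := Finset.prod_subset hsub (f := fun p => p ^ m.factorization p) (fun p _ hp => by
    show p ^ m.factorization p = 1
    rw [show m.factorization p = 0 from by
      rwa [← Nat.support_factorization, Finsupp.notMem_support_iff] at hp, pow_zero])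
  rw [← this]
  exact Nat.factorization_prod_pow_eq_self hm

lemma sqfKernel_mul_sq {m₀ m₁ : ℕ} (h₀ : Squarefree m₀) (h₁ : m₁ ≠ 0) :
    sqfKernel (m₀ * m₁ ^ 2) = m₀ := by
  have hN : m₀ * m₁ ^ 2 ≠ 0 := mul_ne_zero h₀.ne_zero (pow_ne_zero 2 h₁)
  have hF : (m₀ * m₁ ^ 2).factorization = m₀.factorization + 2 • m₁.factorization := by
    rw [Nat.factorization_mul h₀.ne_zero (pow_ne_zero 2 h₁), Nat.factorization_pow]
  have key : ∀ p ∈ (m₀ * m₁ ^ 2).primeFactors,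
      p ^ ((m₀ * m₁ ^ 2).factorization p % 2) = p ^ (m₀.factorization p) := by
    intro p _
    congr 1
    rw [hF]
    have h1 : m₀.factorization p ≤ 1 := h₀.natFactorization_le_one p
    simp only [Finsupp.add_apply, Finsupp.smul_apply, smul_eq_mul]
    omega
  rw [sqfKernel, Finset.prod_congr rfl key]
  exact prod_PF_pow_factorization h₀.ne_zero
    (Nat.primeFactors_mono (Dvd.intro _ rfl) hN)

lemma sqrtPart_mul_sq {m₀ m₁ : ℕ} (h₀ : Squarefree m₀) (h₁ : m₁ ≠ 0) :
    sqrtPart (m₀ * m₁ ^ 2) = m₁ := by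
  have hN : m₀ * m₁ ^ 2 ≠ 0 := mul_ne_zero h₀.ne_zero (pow_ne_zero 2 h₁)
  have hF : (m₀ * m₁ ^ 2).factorization = m₀.factorization + 2 • m₁.factorization := by
    rw [Nat.factorization_mul h₀.ne_zero (pow_ne_zero 2 h₁), Nat.factorization_pow]
  have key : ∀ p ∈ (m₀ * m₁ ^ 2).primeFactors,
      p ^ ((m₀ * m₁ ^ 2).factorization p / 2) = p ^ (m₁.factorization p) := by
    intro p _
    congr 1
    rw [hF]
    have h1 : m₀.factorization p ≤ 1 := h₀.natFactorization_le_one p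
    simp only [Finsupp.add_apply, Finsupp.smul_apply, smul_eq_mul]
    omega
  rw [sqrtPart, Finset.prod_congr rfl key]
  refine prod_PF_pow_factorization h₁ (subset_trans ?_ (Nat.primeFactors_mono
    (Dvd.intro_left _ rfl) hN))
  rw [Nat.primeFactors_pow _ (by norm_num)]

lemma odd_of_dvd_odd {d n : ℕ} (h : d ∣ n) (hn : n % 2 = 1) : d % 2 = 1 := by
  rcases Nat.mod_two_eq_zero_or_one d with h2 | h2
  · obtain ⟨c, rfl⟩ := h
    rw [Nat.mul_mod, h2] at hn
    simp at hn
  · exact h2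

lemma mem_oddSqfree {Q n : ℕ} :
    n ∈ oddSqfree Q ↔ (1 ≤ n ∧ n ≤ Q) ∧ n % 2 = 1 ∧ Squarefree n := by
  simp [oddSqfree, Finset.mem_filter, Finset.mem_Icc]

lemma sum_decomp (P : ℕ) (f : ℕ → ℂ) :
    ∑ m ∈ (Finset.Icc 1 P).filter (fun m => m % 2 = 1), f m
      = ∑ m₁ ∈ (Finset.Icc 1 P).filter (fun m => m % 2 = 1),
          ∑ m₀ ∈ oddSqfree (P / m₁ ^ 2), f (m₀ * m₁ ^ 2) := by
  rw [← Finset.sum_sigma ((Finset.Icc 1 P).filter (fun m => m % 2 = 1))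
    (fun m₁ => oddSqfree (P / m₁ ^ 2)) (fun x => f (x.2 * x.1 ^ 2))]
  refine Finset.sum_nbij' (fun m => (⟨sqrtPart m, sqfKernel m⟩ : (_ : ℕ) × ℕ))
    (fun x => x.2 * x.1 ^ 2) ?_ ?_ ?_ ?_ ?_
  · intro m hm
    rw [Finset.mem_filter, Finset.mem_Icc] at hm
    obtain ⟨⟨h1, hP⟩, hodd⟩ := hm
    have hm0 : m ≠ 0 := by omega
    have heq := sqfKernel_mul_sqrtPart_sq hm0
    have hrdvd : sqrtPart m ∣ m := by
      refine dvd_trans (dvd_pow_self _ (by norm_num : (2:ℕ) ≠ 0)) ⟨sqfKernel m, by rw [mul_comm] at heq; exact heq.symm⟩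
    have hkdvd : sqfKernel m ∣ m := ⟨sqrtPart m ^ 2, heq.symm⟩
    rw [Finset.mem_sigma, Finset.mem_filter, Finset.mem_Icc, mem_oddSqfree]
    refine ⟨⟨⟨sqrtPart_pos m, le_trans (Nat.le_of_dvd (by omega) hrdvd) hP⟩,
      odd_of_dvd_odd hrdvd hodd⟩,
      ⟨⟨sqfKernel_pos m, ?_⟩, odd_of_dvd_odd hkdvd hodd, squarefree_sqfKernel m⟩⟩
    rw [Nat.le_div_iff_mul_le (pow_pos (sqrtPart_pos m) 2)]
    exact le_of_eq_of_le heq hP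
  · rintro ⟨m₁, m₀⟩ hx
    rw [Finset.mem_sigma, Finset.mem_filter, Finset.mem_Icc, mem_oddSqfree] at hx
    dsimp only at hx ⊢
    obtain ⟨⟨⟨h11, h1P⟩, h1odd⟩, ⟨h01, h0le⟩, h0odd, h0sf⟩ := hx
    rw [Finset.mem_filter, Finset.mem_Icc]
    have hle : m₀ * m₁ ^ 2 ≤ P := (Nat.le_div_iff_mul_le (pow_pos h11 2)).mp h0le
    refine ⟨⟨Nat.mul_pos h01 (pow_pos h11 2), hle⟩, ?_⟩
    rw [Nat.mul_mod, Nat.pow_mod, h1odd, h0odd]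
  · intro m hm
    rw [Finset.mem_filter, Finset.mem_Icc] at hm
    exact sqfKernel_mul_sqrtPart_sq (by omega)
  · rintro ⟨m₁, m₀⟩ hx
    rw [Finset.mem_sigma, Finset.mem_filter, Finset.mem_Icc, mem_oddSqfree] at hx
    dsimp only at hx ⊢
    obtain ⟨⟨⟨h11, h1P⟩, h1odd⟩, ⟨h01, h0le⟩, h0odd, h0sf⟩ := hx
    rw [sqrtPart_mul_sq h0sf (by omega), sqfKernel_mul_sq h0sf (by omega)]
  · intro m hm
    rw [Finset.mem_filter, Finset.mem_Icc] at hm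
    dsimp only
    rw [sqfKernel_mul_sqrtPart_sq (by omega : m ≠ 0)]

lemma rpow_step_lower {δ : ℝ} (h0 : 0 < δ) (h1 : δ ≤ 1) {x : ℝ} (hx : 1 ≤ x) :
    δ * x ^ (δ - 1) ≤ x ^ δ - (x - 1) ^ δ := by
  obtain ⟨c, hc, hslope⟩ := exists_hasDerivAt_eq_slope (fun y => y ^ δ)
    (fun y => δ * y ^ (δ - 1)) (by linarith : x - 1 < x)
    (fun y hy => (Real.continuousAt_rpow_const y δ (Or.inr h0.le)).continuousWithinAt)
    (fun y hy => Real.hasDerivAt_rpow_const (Or.inl (by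
      have := hy.1; intro h; rw [h] at this; linarith)))
  rw [sub_sub_cancel, div_one] at hslope
  rw [← hslope]
  have hc0 : 0 < c := by have := hc.1; linarith
  have : x ^ (δ - 1) ≤ c ^ (δ - 1) :=
    Real.rpow_le_rpow_of_nonpos hc0 hc.2.le (by linarith)
  exact mul_le_mul_of_nonneg_left this h0.le

lemma rpow_step_upper {ε : ℝ} (h0 : 0 < ε) {x : ℝ} (hx : 2 ≤ x) :
    ε * x ^ (-ε - 1) ≤ (x - 1) ^ (-ε) - x ^ (-ε) := by
  obtain ⟨c, hc, hslope⟩ := exists_hasDerivAt_eq_slope (fun y => y ^ (-ε))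
    (fun y => -ε * y ^ (-ε - 1)) (by linarith : x - 1 < x)
    (fun y hy => (Real.continuousAt_rpow_const y (-ε) (Or.inl (by
      rintro rfl; norm_num at hy; linarith [hy.1]))).continuousWithinAt)
    (fun y hy => Real.hasDerivAt_rpow_const (Or.inl (by
      have := hy.1; intro h; rw [h] at this; linarith)))
  rw [sub_sub_cancel, div_one] at hslope
  have hc0 : 0 < c := by have := hc.1; linarith
  have hkey : x ^ (-ε - 1) ≤ c ^ (-ε - 1) :=
    Real.rpow_le_rpow_of_nonpos hc0 hc.2.le (by linarith)
  have : -ε * c ^ (-ε - 1) = x ^ (-ε) - (x - 1) ^ (-ε) := hslope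
  nlinarith [Real.rpow_nonneg hc0.le (-ε - 1)]

lemma sum_Icc_rpow_le {δ : ℝ} (h0 : 0 < δ) (h1 : δ < 1) (N : ℕ) :
    ∑ k ∈ Finset.Icc 1 N, (k : ℝ) ^ (δ - 1) ≤ (N : ℝ) ^ δ / δ := by
  induction N with
  | zero => simp [Real.zero_rpow h0.ne']
  | succ n ih =>
    rcases Nat.eq_zero_or_pos n with rfl | hn
    · norm_num
      rw [le_inv_comm₀ (by norm_num) h0]
      linarith
    · rw [Finset.sum_Icc_succ_top (by omega : 1 ≤ n + 1)]
      have hstep := rpow_step_lower h0 h1.le (x := (n : ℝ) + 1) (by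
        have : (1:ℝ) ≤ (n:ℝ) := by exact_mod_cast hn
        linarith)
      have hcast : ((n + 1 : ℕ) : ℝ) = (n : ℝ) + 1 := by push_cast; ring
      rw [hcast]
      have : ((n : ℝ) + 1) ^ (δ - 1) ≤ (((n:ℝ) + 1) ^ δ - (n : ℝ) ^ δ) / δ := by
        rw [le_div_iff₀ h0]
        have : ((n:ℝ) + 1 - 1) = (n : ℝ) := by ring
        rw [this] at hstep
        linarith
      calc ∑ k ∈ Finset.Icc 1 n, (k:ℝ) ^ (δ - 1) + ((n:ℝ) + 1) ^ (δ - 1)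
          ≤ (n:ℝ) ^ δ / δ + (((n:ℝ) + 1) ^ δ - (n : ℝ) ^ δ) / δ := by
            exact add_le_add ih this
        _ = ((n:ℝ) + 1) ^ δ / δ := by ring

lemma sum_Icc_rpow_neg_le {ε : ℝ} (h0 : 0 < ε) (N : ℕ) :
    ∑ k ∈ Finset.Icc 1 N, (k : ℝ) ^ (-1 - ε) ≤ 1 + 1 / ε := by
  have key : ∀ n : ℕ, 1 ≤ n → ∑ k ∈ Finset.Icc 1 n, (k : ℝ) ^ (-1 - ε)
      ≤ 1 + (1 - (n : ℝ) ^ (-ε)) / ε := by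
    intro n hn
    induction n with
    | zero => omega
    | succ m ih =>
      rcases Nat.eq_zero_or_pos m with rfl | hm
      · norm_num
      · rw [Finset.sum_Icc_succ_top (by omega : 1 ≤ m + 1)]
        have hstep := rpow_step_upper h0 (x := (m : ℝ) + 1) (by
          have : (1:ℝ) ≤ (m:ℝ) := by exact_mod_cast hm
          linarith)
        have hcast : ((m + 1 : ℕ) : ℝ) = (m : ℝ) + 1 := by push_cast; ring
        have hmm : ((m:ℝ) + 1 - 1) = (m : ℝ) := by ring
        rw [hmm] at hstep
        have h1 : ((m:ℝ) + 1) ^ (-1 - ε) ≤ ((m:ℝ) ^ (-ε) - ((m:ℝ)+1) ^ (-ε)) / ε := by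
          rw [le_div_iff₀ h0]
          have : (-ε - 1) = (-1 - ε) := by ring
          rw [this] at hstep
          linarith
        have := ih hm
        rw [hcast]
        calc ∑ k ∈ Finset.Icc 1 m, (k:ℝ) ^ (-1 - ε) + ((m:ℝ) + 1) ^ (-1 - ε)
            ≤ (1 + (1 - (m : ℝ) ^ (-ε)) / ε) + ((m:ℝ) ^ (-ε) - ((m:ℝ)+1) ^ (-ε)) / ε :=
              add_le_add this h1
          _ = 1 + (1 - ((m:ℝ)+1) ^ (-ε)) / ε := by ring
  rcases Nat.eq_zero_or_pos N with rfl | hN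
  · simp
    positivity
  · refine le_trans (key N hN) ?_
    have : 0 ≤ (N:ℝ) ^ (-ε) := Real.rpow_nonneg (Nat.cast_nonneg N) _
    have hd : (1 - (N : ℝ) ^ (-ε)) / ε ≤ 1 / ε := by
      gcongr
      linarith
    linarith

lemma rpow_sq' {x : ℝ} (hx : 0 ≤ x) (s : ℝ) : (x ^ s) ^ 2 = x ^ (2 * s) := by
  rw [← Real.rpow_natCast (x ^ s) 2, ← Real.rpow_mul hx]
  norm_num [mul_comm]

lemma norm_jacobi_le_one (a : ℤ) (b : ℕ) : ‖((jacobiSym a b : ℤ) : ℂ)‖ ≤ 1 := by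
  rcases jacobiSym.trichotomy a b with h | h | h <;> rw [h] <;> norm_num

lemma coeff_sq_bound {ε : ℝ} (hε : 0 < ε) {c : ℂ} {k r : ℕ} (hk : 1 ≤ k) (hr : 1 ≤ r)
    (hc : ‖c‖ ≤ ((k * r ^ 2 : ℕ) : ℝ) ^ (-(1:ℝ)/2 + ε)) :
    ‖c‖ ^ 2 ≤ (k : ℝ) ^ (2*ε - 1) * (r : ℝ) ^ (4*ε - 2) := by
  have hk0 : (0:ℝ) < k := by exact_mod_cast hk
  have hr0 : (0:ℝ) < r := by exact_mod_cast hr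
  have h1 : ‖c‖ ^ 2 ≤ (((k * r ^ 2 : ℕ) : ℝ) ^ (-(1:ℝ)/2 + ε)) ^ 2 :=
    pow_le_pow_left₀ (norm_nonneg c) hc 2
  refine h1.trans_eq ?_
  rw [rpow_sq' (by positivity)]
  push_cast
  rw [Real.mul_rpow hk0.le (by positivity), ← Real.rpow_natCast (r:ℝ) 2,
    ← Real.rpow_mul hr0.le]
  norm_num
  rw [show (2:ℝ) * (-(1/2) + ε) = 2*ε - 1 by ring]
  rw [show (2:ℝ) * (2*ε - 1) = 4*ε - 2 by ring]

lemma sum_sq_coeff_bound {ε : ℝ} (hε : 0 < ε) (hε2 : ε < 1/2) (P r : ℕ) (hr : 1 ≤ r)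
    (g : ℕ → ℝ) (hg0 : ∀ k, 0 ≤ g k)
    (hg : ∀ k ∈ oddSqfree (P / r ^ 2), g k ≤ (k:ℝ)^(2*ε-1) * (r:ℝ)^(4*ε-2)) :
    ∑ k ∈ oddSqfree (P / r ^ 2), g k ≤ (P:ℝ)^(2*ε) * (r:ℝ)^(-2:ℝ) / (2*ε) := by
  have hr0 : (0:ℝ) < r := by exact_mod_cast hr
  have hP1 : ((P / r ^ 2 : ℕ) : ℝ) ≤ (P:ℝ) / (r:ℝ)^2 := by
    have := Nat.cast_div_le (α := ℝ) (m := P) (n := r ^ 2)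
    push_cast at this ⊢
    exact this
  calc ∑ k ∈ oddSqfree (P / r ^ 2), g k
      ≤ ∑ k ∈ oddSqfree (P / r ^ 2), (k:ℝ)^(2*ε-1) * (r:ℝ)^(4*ε-2) :=
        Finset.sum_le_sum hg
    _ ≤ ∑ k ∈ Finset.Icc 1 (P / r ^ 2), (k:ℝ)^(2*ε-1) * (r:ℝ)^(4*ε-2) := by
        apply Finset.sum_le_sum_of_subset_of_nonneg (Finset.filter_subset _ _)
        intro k _ _
        have : (0:ℝ) ≤ (k:ℝ)^(2*ε-1) := Real.rpow_nonneg (Nat.cast_nonneg k) _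
        positivity
    _ = (∑ k ∈ Finset.Icc 1 (P / r ^ 2), (k:ℝ)^(2*ε-1)) * (r:ℝ)^(4*ε-2) :=
        (Finset.sum_mul _ _ _).symm
    _ ≤ (((P / r ^ 2 : ℕ):ℝ)^(2*ε)/(2*ε)) * (r:ℝ)^(4*ε-2) := by
        exact mul_le_mul_of_nonneg_right
          (sum_Icc_rpow_le (by linarith) (by linarith) _)
          (Real.rpow_nonneg hr0.le _)
    _ ≤ (((P:ℝ)/(r:ℝ)^2)^(2*ε)/(2*ε)) * (r:ℝ)^(4*ε-2) := by
        gcongr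
    _ = (P:ℝ)^(2*ε) * (r:ℝ)^(-2:ℝ) / (2*ε) := by
        rw [Real.div_rpow (Nat.cast_nonneg P) (by positivity),
          ← Real.rpow_natCast (r:ℝ) 2, ← Real.rpow_mul hr0.le,
          show (4*ε-2 : ℝ) = ((2:ℕ):ℝ)*(2*ε) + (-2:ℝ) by push_cast; ring,
          Real.rpow_add hr0]
        have hne : (r:ℝ) ^ (((2:ℕ):ℝ)*(2*ε)) ≠ 0 := by positivity
        field_simp

lemma le_of_sq_le_sq' {t u : ℝ} (ht : 0 ≤ t) (hu : 0 ≤ u) (h : t^2 ≤ u^2) : t ≤ u := by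
  nlinarith

lemma key_bound {ε : ℝ} (hε : 0 < ε) (hε2 : ε < 1/2) {C₀ : ℝ} (hC₀ : 0 < C₀)
    (hls : ∀ P Q : ℕ, ∀ a : ℕ → ℂ,
      ∑ m ∈ oddSqfree P, ‖∑ n ∈ oddSqfree Q, a n * (jacobiSym (n:ℤ) m : ℂ)‖ ^ 2 ≤
        C₀ * ((P:ℝ) * Q) ^ ε * ((P:ℝ) + Q) * ∑ n ∈ oddSqfree Q, ‖a n‖ ^ 2)
    (P Q : ℕ) (hP : 1 ≤ P) (hQ : 1 ≤ Q) (a b : ℕ → ℂ)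
    (ha : ∀ m, 1 ≤ m → ‖a m‖ ≤ (m:ℝ) ^ (-(1:ℝ)/2 + ε))
    (hb : ∀ n, 1 ≤ n → ‖b n‖ ≤ (n:ℝ) ^ (-(1:ℝ)/2 + ε))
    (m₁ n₁ : ℕ) (hm₁ : 1 ≤ m₁) (hn₁ : 1 ≤ n₁) :
    ‖∑ m₀ ∈ oddSqfree (P / m₁ ^ 2), ∑ n₀ ∈ oddSqfree (Q / n₁ ^ 2),
        a (m₀ * m₁ ^ 2) * b (n₀ * n₁ ^ 2) * ((jacobiSym (n₀ : ℤ) (m₀ * m₁ ^ 2) : ℤ) : ℂ)‖ ≤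
      Real.sqrt C₀ / (2 * ε) * ((m₁:ℝ) ^ (-1 - ε) * (n₁:ℝ) ^ (-1 - ε)) *
        ((P:ℝ) ^ (3 * ε / 2) * (Q:ℝ) ^ (3 * ε / 2)) * ((P:ℝ) + (Q:ℝ)) ^ ((1:ℝ) / 2) := by
  have hm₁0 : (0:ℝ) < (m₁:ℝ) := by exact_mod_cast hm₁
  have hn₁0 : (0:ℝ) < (n₁:ℝ) := by exact_mod_cast hn₁
  have hP0 : (0:ℝ) < (P:ℝ) := by exact_mod_cast hP
  have hQ0 : (0:ℝ) < (Q:ℝ) := by exact_mod_cast hQ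
  set P₁ := P / m₁ ^ 2 with hP₁
  set Q₁ := Q / n₁ ^ 2 with hQ₁
  set d : ℕ → ℂ := fun n₀ => b (n₀ * n₁ ^ 2) * ((jacobiSym (n₀:ℤ) (m₁^2) : ℤ) : ℂ) with hd
  have hsplit : ∀ m₀ ∈ oddSqfree P₁,
      (∑ n₀ ∈ oddSqfree Q₁,
        a (m₀ * m₁ ^ 2) * b (n₀ * n₁ ^ 2) * ((jacobiSym (n₀:ℤ) (m₀ * m₁^2) : ℤ) : ℂ))
      = a (m₀ * m₁ ^ 2) * ∑ n₀ ∈ oddSqfree Q₁, d n₀ * ((jacobiSym (n₀:ℤ) m₀ : ℤ) : ℂ) := by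
    intro m₀ hm₀
    have h0 : m₀ ≠ 0 := by
      have := (mem_oddSqfree.mp hm₀).1.1; omega
    rw [Finset.mul_sum]
    refine Finset.sum_congr rfl (fun n₀ _ => ?_)
    rw [jacobiSym.mul_right' _ h0 (pow_ne_zero 2 (by omega : m₁ ≠ 0))]
    push_cast
    ring
  rw [Finset.sum_congr rfl hsplit]
  set F : ℕ → ℝ := fun m₀ => ‖a (m₀ * m₁ ^ 2)‖ with hF
  set G : ℕ → ℝ := fun m₀ => ‖∑ n₀ ∈ oddSqfree Q₁, d n₀ * ((jacobiSym (n₀:ℤ) m₀ : ℤ) : ℂ)‖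
    with hG
  have tri : ‖∑ m₀ ∈ oddSqfree P₁,
      a (m₀ * m₁ ^ 2) * ∑ n₀ ∈ oddSqfree Q₁, d n₀ * ((jacobiSym (n₀:ℤ) m₀ : ℤ) : ℂ)‖
      ≤ ∑ m₀ ∈ oddSqfree P₁, F m₀ * G m₀ := by
    refine (norm_sum_le _ _).trans (le_of_eq (Finset.sum_congr rfl (fun m₀ _ => ?_)))
    rw [norm_mul]
  have CS : (∑ m₀ ∈ oddSqfree P₁, F m₀ * G m₀)^2
      ≤ (∑ m₀ ∈ oddSqfree P₁, F m₀ ^ 2) * (∑ m₀ ∈ oddSqfree P₁, G m₀ ^ 2) :=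
    Finset.sum_mul_sq_le_sq_mul_sq _ F G
  have hX : ∑ m₀ ∈ oddSqfree P₁, F m₀ ^ 2
      ≤ (P:ℝ)^(2*ε) * (m₁:ℝ)^(-2:ℝ) / (2*ε) := by
    refine sum_sq_coeff_bound hε hε2 P m₁ hm₁ _ (fun k => sq_nonneg _) (fun k hk => ?_)
    have hk1 : 1 ≤ k := (mem_oddSqfree.mp hk).1.1
    exact coeff_sq_bound hε hk1 hm₁ (ha _ (Nat.one_le_iff_ne_zero.mpr (by positivity)))
  have hdsum : ∑ n₀ ∈ oddSqfree Q₁, ‖d n₀‖ ^ 2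
      ≤ (Q:ℝ)^(2*ε) * (n₁:ℝ)^(-2:ℝ) / (2*ε) := by
    refine sum_sq_coeff_bound hε hε2 Q n₁ hn₁ _ (fun k => sq_nonneg _) (fun k hk => ?_)
    have hk1 : 1 ≤ k := (mem_oddSqfree.mp hk).1.1
    refine coeff_sq_bound hε hk1 hn₁ ?_
    rw [hd, norm_mul]
    calc ‖b (k * n₁ ^ 2)‖ * ‖((jacobiSym (k:ℤ) (m₁^2) : ℤ) : ℂ)‖
        ≤ ((k * n₁ ^ 2 : ℕ) : ℝ) ^ (-(1:ℝ)/2 + ε) * 1 := by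
          refine mul_le_mul (hb _ (Nat.one_le_iff_ne_zero.mpr (by positivity)))
            (norm_jacobi_le_one _ _) (norm_nonneg _) (Real.rpow_nonneg (Nat.cast_nonneg _) _)
      _ = ((k * n₁ ^ 2 : ℕ) : ℝ) ^ (-(1:ℝ)/2 + ε) := by ring
  have hY := hls P₁ Q₁ d
  have hprod : ((P₁:ℝ) * (Q₁:ℝ)) ^ ε
      ≤ (P:ℝ)^ε * (m₁:ℝ)^(-(2*ε)) * ((Q:ℝ)^ε * (n₁:ℝ)^(-(2*ε))) := by
    have h1 : (P₁:ℝ) ≤ (P:ℝ) / (m₁:ℝ)^2 := by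
      have := Nat.cast_div_le (α := ℝ) (m := P) (n := m₁ ^ 2)
      push_cast at this ⊢
      exact this
    have h2 : (Q₁:ℝ) ≤ (Q:ℝ) / (n₁:ℝ)^2 := by
      have := Nat.cast_div_le (α := ℝ) (m := Q) (n := n₁ ^ 2)
      push_cast at this ⊢
      exact this
    calc ((P₁:ℝ) * (Q₁:ℝ)) ^ ε
        ≤ (((P:ℝ) / (m₁:ℝ)^2) * ((Q:ℝ) / (n₁:ℝ)^2)) ^ ε := by
          refine Real.rpow_le_rpow (by positivity) ?_ hε.le
          exact mul_le_mul h1 h2 (Nat.cast_nonneg _) (by positivity)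
      _ = (P:ℝ)^ε * (m₁:ℝ)^(-(2*ε)) * ((Q:ℝ)^ε * (n₁:ℝ)^(-(2*ε))) := by
          rw [Real.mul_rpow (by positivity) (by positivity),
            Real.div_rpow (Nat.cast_nonneg _) (by positivity),
            Real.div_rpow (Nat.cast_nonneg _) (by positivity),
            ← Real.rpow_natCast (m₁:ℝ) 2, ← Real.rpow_natCast (n₁:ℝ) 2,
            ← Real.rpow_mul hm₁0.le, ← Real.rpow_mul hn₁0.le,
            div_eq_mul_inv, div_eq_mul_inv,
            ← Real.rpow_neg hm₁0.le, ← Real.rpow_neg hn₁0.le]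
          norm_num
  have hsumle : (P₁:ℝ) + (Q₁:ℝ) ≤ (P:ℝ) + (Q:ℝ) := by
    have g1 : P₁ ≤ P := Nat.div_le_self _ _
    have g2 : Q₁ ≤ Q := Nat.div_le_self _ _
    have g1' : (P₁:ℝ) ≤ P := by exact_mod_cast g1
    have g2' : (Q₁:ℝ) ≤ Q := by exact_mod_cast g2
    linarith
  have hY' : ∑ m₀ ∈ oddSqfree P₁, G m₀ ^ 2
      ≤ C₀ * ((P:ℝ)^ε * (m₁:ℝ)^(-(2*ε)) * ((Q:ℝ)^ε * (n₁:ℝ)^(-(2*ε)))) * ((P:ℝ) + Q)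
        * ((Q:ℝ)^(2*ε) * (n₁:ℝ)^(-2:ℝ) / (2*ε)) := by
    refine hY.trans ?_
    have hs0 : (0:ℝ) ≤ ∑ n₀ ∈ oddSqfree Q₁, ‖d n₀‖^2 :=
      Finset.sum_nonneg (fun _ _ => sq_nonneg _)
    gcongr <;> first
      | exact hprod
      | exact hsumle
      | exact hdsum
      | positivity
  set RHS := Real.sqrt C₀ / (2 * ε) * ((m₁:ℝ) ^ (-1 - ε) * (n₁:ℝ) ^ (-1 - ε)) *
      ((P:ℝ) ^ (3 * ε / 2) * (Q:ℝ) ^ (3 * ε / 2)) * ((P:ℝ) + (Q:ℝ)) ^ ((1:ℝ) / 2) with hRHS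
  have hRHS2 : RHS ^ 2 = C₀ / ((2*ε)*(2*ε))
      * (((m₁:ℝ)^(-2:ℝ) * (m₁:ℝ)^(-(2*ε))) * ((n₁:ℝ)^(-2:ℝ) * (n₁:ℝ)^(-(2*ε))))
      * (((P:ℝ)^(2*ε) * (P:ℝ)^ε) * ((Q:ℝ)^(2*ε) * (Q:ℝ)^ε)) * ((P:ℝ) + (Q:ℝ)) := by
    rw [hRHS, mul_pow, mul_pow, mul_pow, mul_pow, mul_pow, div_pow, Real.sq_sqrt hC₀.le,
      rpow_sq' hm₁0.le, rpow_sq' hn₁0.le, rpow_sq' hP0.le, rpow_sq' hQ0.le,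
      rpow_sq' (by positivity : (0:ℝ) ≤ (P:ℝ) + (Q:ℝ)),
      show 2 * (-1 - ε) = (-2:ℝ) + (-(2*ε)) by ring,
      Real.rpow_add hm₁0, Real.rpow_add hn₁0,
      show 2 * (3 * ε / 2) = 2*ε + ε by ring,
      Real.rpow_add hP0, Real.rpow_add hQ0,
      show 2 * ((1:ℝ)/2) = 1 by norm_num, Real.rpow_one]
    ring
  have hXnn : (0:ℝ) ≤ ∑ m₀ ∈ oddSqfree P₁, F m₀ ^ 2 :=
    Finset.sum_nonneg (fun _ _ => sq_nonneg _)
  have hfin : (∑ m₀ ∈ oddSqfree P₁, F m₀ * G m₀) ^ 2 ≤ RHS ^ 2 := by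
    rw [hRHS2]
    calc (∑ m₀ ∈ oddSqfree P₁, F m₀ * G m₀) ^ 2
        ≤ (∑ m₀ ∈ oddSqfree P₁, F m₀ ^ 2) * (∑ m₀ ∈ oddSqfree P₁, G m₀ ^ 2) := CS
      _ ≤ ((P:ℝ)^(2*ε) * (m₁:ℝ)^(-2:ℝ) / (2*ε)) *
          (C₀ * ((P:ℝ)^ε * (m₁:ℝ)^(-(2*ε)) * ((Q:ℝ)^ε * (n₁:ℝ)^(-(2*ε)))) * ((P:ℝ) + Q)
            * ((Q:ℝ)^(2*ε) * (n₁:ℝ)^(-2:ℝ) / (2*ε))) := by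
          refine mul_le_mul hX hY' (Finset.sum_nonneg (fun _ _ => sq_nonneg _)) ?_
          positivity
      _ = C₀ / ((2*ε)*(2*ε))
          * (((m₁:ℝ)^(-2:ℝ) * (m₁:ℝ)^(-(2*ε))) * ((n₁:ℝ)^(-2:ℝ) * (n₁:ℝ)^(-(2*ε))))
          * (((P:ℝ)^(2*ε) * (P:ℝ)^ε) * ((Q:ℝ)^(2*ε) * (Q:ℝ)^ε)) * ((P:ℝ) + (Q:ℝ)) := by
          ring
  refine tri.trans (le_of_sq_le_sq' (Finset.sum_nonneg (fun m₀ _ => by positivity)) ?_ hfin)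
  rw [hRHS]
  positivity

theorem large_sieve_corollary (ε : ℝ) (hε : 0 < ε) (C₀ : ℝ) (hC₀ : 0 < C₀)
    (hls : ∀ P Q : ℕ, ∀ a : ℕ → ℂ,
      ∑ m ∈ oddSqfree P, ‖∑ n ∈ oddSqfree Q, a n * (jacobiSym (n:ℤ) m : ℂ)‖ ^ 2 ≤
        C₀ * ((P:ℝ) * Q) ^ ε * ((P:ℝ) + Q) * ∑ n ∈ oddSqfree Q, ‖a n‖ ^ 2) :
    ∃ C > (0:ℝ), ∀ P Q : ℕ, 1 ≤ P → 1 ≤ Q → ∀ a b : ℕ → ℂ,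
      (∀ m, 1 ≤ m → ‖a m‖ ≤ (m:ℝ) ^ (-(1:ℝ)/2 + ε)) →
      (∀ n, 1 ≤ n → ‖b n‖ ≤ (n:ℝ) ^ (-(1:ℝ)/2 + ε)) →
      ‖∑ m ∈ (Finset.Icc 1 P).filter (fun m => m % 2 = 1),
          ∑ n ∈ (Finset.Icc 1 Q).filter (fun n => n % 2 = 1),
            a m * b n * (jacobiSym (sqfKernel n : ℤ) m : ℂ)‖ ≤
        C * ((P:ℝ) * Q) ^ ε * ((P:ℝ) + Q) ^ ((1:ℝ)/2 + ε) := by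
  have hCpos : (0:ℝ) < 1 + Real.sqrt C₀ / (2*ε) * (1 + 1/ε)^2 := by positivity
  refine ⟨1 + Real.sqrt C₀ / (2*ε) * (1 + 1/ε)^2, hCpos, ?_⟩
  intro P Q hP hQ a b ha hb
  have hP0 : (0:ℝ) < (P:ℝ) := by exact_mod_cast hP
  have hQ0 : (0:ℝ) < (Q:ℝ) := by exact_mod_cast hQ
  have hP1 : (1:ℝ) ≤ (P:ℝ) := by exact_mod_cast hP
  have hQ1 : (1:ℝ) ≤ (Q:ℝ) := by exact_mod_cast hQ
  have hPQ1 : (1:ℝ) ≤ (P:ℝ) + Q := by linarith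
  -- common final comparison facts
  have hgeo : ((P:ℝ) * Q) ^ ((1:ℝ)/2) ≤ (P:ℝ) + Q := by
    have h1 : (P:ℝ) * Q ≤ ((P:ℝ) + Q)^2 := by nlinarith
    calc ((P:ℝ) * Q) ^ ((1:ℝ)/2) ≤ (((P:ℝ) + Q)^2) ^ ((1:ℝ)/2) :=
          Real.rpow_le_rpow (by positivity) h1 (by norm_num)
      _ = (P:ℝ) + Q := by
          rw [← Real.rpow_natCast ((P:ℝ) + Q) 2, ← Real.rpow_mul (by positivity)]
          norm_num
  by_cases hε2 : ε < 1/2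
  · -- main case
    have hdec : ∑ m ∈ (Finset.Icc 1 P).filter (fun m => m % 2 = 1),
          ∑ n ∈ (Finset.Icc 1 Q).filter (fun n => n % 2 = 1),
            a m * b n * (jacobiSym (sqfKernel n : ℤ) m : ℂ)
        = ∑ m₁ ∈ (Finset.Icc 1 P).filter (fun m => m % 2 = 1),
            ∑ n₁ ∈ (Finset.Icc 1 Q).filter (fun n => n % 2 = 1),
              ∑ m₀ ∈ oddSqfree (P / m₁ ^ 2), ∑ n₀ ∈ oddSqfree (Q / n₁ ^ 2),
                a (m₀ * m₁ ^ 2) * b (n₀ * n₁ ^ 2) *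
                  ((jacobiSym (n₀ : ℤ) (m₀ * m₁ ^ 2) : ℤ) : ℂ) := by
      rw [sum_decomp P (fun m => ∑ n ∈ (Finset.Icc 1 Q).filter (fun n => n % 2 = 1),
        a m * b n * (jacobiSym (sqfKernel n : ℤ) m : ℂ))]
      refine Finset.sum_congr rfl (fun m₁ hm₁ => ?_)
      refine Eq.trans (Finset.sum_congr rfl (fun m₀ hm₀ => ?_)) Finset.sum_comm
      rw [sum_decomp Q (fun n =>
        a (m₀ * m₁ ^ 2) * b n * (jacobiSym (sqfKernel n : ℤ) (m₀ * m₁ ^ 2) : ℂ))]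
      refine Finset.sum_congr rfl (fun n₁ hn₁ => Finset.sum_congr rfl (fun n₀ hn₀ => ?_))
      have hsf : Squarefree n₀ := (mem_oddSqfree.mp hn₀).2.2
      have hn₁1 : n₁ ≠ 0 := by
        rw [Finset.mem_filter, Finset.mem_Icc] at hn₁
        omega
      rw [sqfKernel_mul_sq hsf hn₁1]
    rw [hdec]
    have tri : ‖∑ m₁ ∈ (Finset.Icc 1 P).filter (fun m => m % 2 = 1),
            ∑ n₁ ∈ (Finset.Icc 1 Q).filter (fun n => n % 2 = 1),
              ∑ m₀ ∈ oddSqfree (P / m₁ ^ 2), ∑ n₀ ∈ oddSqfree (Q / n₁ ^ 2),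
                a (m₀ * m₁ ^ 2) * b (n₀ * n₁ ^ 2) *
                  ((jacobiSym (n₀ : ℤ) (m₀ * m₁ ^ 2) : ℤ) : ℂ)‖
        ≤ ∑ m₁ ∈ (Finset.Icc 1 P).filter (fun m => m % 2 = 1),
            ∑ n₁ ∈ (Finset.Icc 1 Q).filter (fun n => n % 2 = 1),
              ‖∑ m₀ ∈ oddSqfree (P / m₁ ^ 2), ∑ n₀ ∈ oddSqfree (Q / n₁ ^ 2),
                a (m₀ * m₁ ^ 2) * b (n₀ * n₁ ^ 2) *
                  ((jacobiSym (n₀ : ℤ) (m₀ * m₁ ^ 2) : ℤ) : ℂ)‖ :=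
      (norm_sum_le _ _).trans (Finset.sum_le_sum (fun m₁ _ => norm_sum_le _ _))
    have hkey : ∀ m₁ ∈ (Finset.Icc 1 P).filter (fun m => m % 2 = 1),
        ∀ n₁ ∈ (Finset.Icc 1 Q).filter (fun n => n % 2 = 1),
        ‖∑ m₀ ∈ oddSqfree (P / m₁ ^ 2), ∑ n₀ ∈ oddSqfree (Q / n₁ ^ 2),
                a (m₀ * m₁ ^ 2) * b (n₀ * n₁ ^ 2) *
                  ((jacobiSym (n₀ : ℤ) (m₀ * m₁ ^ 2) : ℤ) : ℂ)‖
          ≤ Real.sqrt C₀ / (2 * ε) * ((m₁:ℝ) ^ (-1 - ε) * (n₁:ℝ) ^ (-1 - ε)) *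
              ((P:ℝ) ^ (3 * ε / 2) * (Q:ℝ) ^ (3 * ε / 2)) * ((P:ℝ) + (Q:ℝ)) ^ ((1:ℝ) / 2) := by
      intro m₁ hm₁ n₁ hn₁
      rw [Finset.mem_filter, Finset.mem_Icc] at hm₁ hn₁
      exact key_bound hε hε2 hC₀ hls P Q hP hQ a b ha hb m₁ n₁ hm₁.1.1 hn₁.1.1
    have hSm : ∑ m₁ ∈ (Finset.Icc 1 P).filter (fun m => m % 2 = 1), (m₁:ℝ) ^ (-1 - ε)
        ≤ 1 + 1 / ε := by
      refine le_trans (Finset.sum_le_sum_of_subset_of_nonneg (Finset.filter_subset _ _)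
        (fun k _ _ => Real.rpow_nonneg (Nat.cast_nonneg k) _)) (sum_Icc_rpow_neg_le hε P)
    have hSn : ∑ n₁ ∈ (Finset.Icc 1 Q).filter (fun n => n % 2 = 1), (n₁:ℝ) ^ (-1 - ε)
        ≤ 1 + 1 / ε := by
      refine le_trans (Finset.sum_le_sum_of_subset_of_nonneg (Finset.filter_subset _ _)
        (fun k _ _ => Real.rpow_nonneg (Nat.cast_nonneg k) _)) (sum_Icc_rpow_neg_le hε Q)
    have hsum_eq : ∑ m₁ ∈ (Finset.Icc 1 P).filter (fun m => m % 2 = 1),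
          ∑ n₁ ∈ (Finset.Icc 1 Q).filter (fun n => n % 2 = 1),
            (Real.sqrt C₀ / (2 * ε) * ((m₁:ℝ) ^ (-1 - ε) * (n₁:ℝ) ^ (-1 - ε)) *
              ((P:ℝ) ^ (3 * ε / 2) * (Q:ℝ) ^ (3 * ε / 2)) * ((P:ℝ) + (Q:ℝ)) ^ ((1:ℝ) / 2))
        = (Real.sqrt C₀ / (2 * ε) *
            ((P:ℝ) ^ (3 * ε / 2) * (Q:ℝ) ^ (3 * ε / 2)) * ((P:ℝ) + (Q:ℝ)) ^ ((1:ℝ) / 2)) *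
          ((∑ m₁ ∈ (Finset.Icc 1 P).filter (fun m => m % 2 = 1), (m₁:ℝ) ^ (-1 - ε)) *
           (∑ n₁ ∈ (Finset.Icc 1 Q).filter (fun n => n % 2 = 1), (n₁:ℝ) ^ (-1 - ε))) := by
      rw [Finset.sum_mul_sum, Finset.mul_sum]
      refine Finset.sum_congr rfl (fun m₁ _ => ?_)
      rw [Finset.mul_sum]
      refine Finset.sum_congr rfl (fun n₁ _ => ?_)
      ring
    have hstep : ‖∑ m₁ ∈ (Finset.Icc 1 P).filter (fun m => m % 2 = 1),
            ∑ n₁ ∈ (Finset.Icc 1 Q).filter (fun n => n % 2 = 1),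
              ∑ m₀ ∈ oddSqfree (P / m₁ ^ 2), ∑ n₀ ∈ oddSqfree (Q / n₁ ^ 2),
                a (m₀ * m₁ ^ 2) * b (n₀ * n₁ ^ 2) *
                  ((jacobiSym (n₀ : ℤ) (m₀ * m₁ ^ 2) : ℤ) : ℂ)‖
        ≤ (Real.sqrt C₀ / (2 * ε) *
            ((P:ℝ) ^ (3 * ε / 2) * (Q:ℝ) ^ (3 * ε / 2)) * ((P:ℝ) + (Q:ℝ)) ^ ((1:ℝ) / 2)) *
          ((1 + 1/ε) * (1 + 1/ε)) := by
      refine tri.trans ?_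
      calc ∑ m₁ ∈ (Finset.Icc 1 P).filter (fun m => m % 2 = 1),
            ∑ n₁ ∈ (Finset.Icc 1 Q).filter (fun n => n % 2 = 1),
              ‖∑ m₀ ∈ oddSqfree (P / m₁ ^ 2), ∑ n₀ ∈ oddSqfree (Q / n₁ ^ 2),
                a (m₀ * m₁ ^ 2) * b (n₀ * n₁ ^ 2) *
                  ((jacobiSym (n₀ : ℤ) (m₀ * m₁ ^ 2) : ℤ) : ℂ)‖
          ≤ ∑ m₁ ∈ (Finset.Icc 1 P).filter (fun m => m % 2 = 1),
            ∑ n₁ ∈ (Finset.Icc 1 Q).filter (fun n => n % 2 = 1),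
              (Real.sqrt C₀ / (2 * ε) * ((m₁:ℝ) ^ (-1 - ε) * (n₁:ℝ) ^ (-1 - ε)) *
                ((P:ℝ) ^ (3 * ε / 2) * (Q:ℝ) ^ (3 * ε / 2)) *
                  ((P:ℝ) + (Q:ℝ)) ^ ((1:ℝ) / 2)) :=
            Finset.sum_le_sum (fun m₁ hm₁ => Finset.sum_le_sum (fun n₁ hn₁ =>
              hkey m₁ hm₁ n₁ hn₁))
        _ = (Real.sqrt C₀ / (2 * ε) *
              ((P:ℝ) ^ (3 * ε / 2) * (Q:ℝ) ^ (3 * ε / 2)) *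
                ((P:ℝ) + (Q:ℝ)) ^ ((1:ℝ) / 2)) *
            ((∑ m₁ ∈ (Finset.Icc 1 P).filter (fun m => m % 2 = 1), (m₁:ℝ) ^ (-1 - ε)) *
             (∑ n₁ ∈ (Finset.Icc 1 Q).filter (fun n => n % 2 = 1), (n₁:ℝ) ^ (-1 - ε))) :=
            hsum_eq
        _ ≤ (Real.sqrt C₀ / (2 * ε) *
              ((P:ℝ) ^ (3 * ε / 2) * (Q:ℝ) ^ (3 * ε / 2)) *
                ((P:ℝ) + (Q:ℝ)) ^ ((1:ℝ) / 2)) * ((1 + 1/ε) * (1 + 1/ε)) := by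
            refine mul_le_mul_of_nonneg_left ?_ (by positivity)
            refine mul_le_mul hSm hSn (Finset.sum_nonneg
              (fun k _ => Real.rpow_nonneg (Nat.cast_nonneg k) _)) (by positivity)
    have hfinal : (P:ℝ) ^ (3 * ε / 2) * (Q:ℝ) ^ (3 * ε / 2) * ((P:ℝ)+Q) ^ ((1:ℝ)/2)
        ≤ ((P:ℝ) * Q) ^ ε * ((P:ℝ)+Q) ^ ((1:ℝ)/2 + ε) := by
      have h1 : (P:ℝ) ^ (3 * ε / 2) * (Q:ℝ) ^ (3 * ε / 2)
          = ((P:ℝ) * Q) ^ ε * ((P:ℝ) * Q) ^ (ε / 2) := by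
        rw [← Real.mul_rpow hP0.le hQ0.le, ← Real.rpow_add (by positivity)]
        congr 1
        ring
      have h2 : ((P:ℝ) * Q) ^ (ε / 2) ≤ ((P:ℝ) + Q) ^ ε := by
        have h3 : ((P:ℝ) * Q) ^ (ε / 2) = (((P:ℝ) * Q) ^ ((1:ℝ)/2)) ^ ε := by
          rw [← Real.rpow_mul (by positivity)]
          congr 1
          ring
        rw [h3]
        exact Real.rpow_le_rpow (by positivity) hgeo hε.le
      calc (P:ℝ) ^ (3 * ε / 2) * (Q:ℝ) ^ (3 * ε / 2) * ((P:ℝ)+Q) ^ ((1:ℝ)/2)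
          = ((P:ℝ) * Q) ^ ε * (((P:ℝ) * Q) ^ (ε / 2) * ((P:ℝ)+Q) ^ ((1:ℝ)/2)) := by
            rw [h1]; ring
        _ ≤ ((P:ℝ) * Q) ^ ε * (((P:ℝ) + Q) ^ ε * ((P:ℝ)+Q) ^ ((1:ℝ)/2)) := by
            refine mul_le_mul_of_nonneg_left ?_ (by positivity)
            exact mul_le_mul_of_nonneg_right h2 (by positivity)
        _ = ((P:ℝ) * Q) ^ ε * ((P:ℝ)+Q) ^ ((1:ℝ)/2 + ε) := by
            rw [← Real.rpow_add (by positivity : (0:ℝ) < (P:ℝ) + Q)]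
            congr 2
            ring
    refine hstep.trans ?_
    calc (Real.sqrt C₀ / (2 * ε) *
            ((P:ℝ) ^ (3 * ε / 2) * (Q:ℝ) ^ (3 * ε / 2)) * ((P:ℝ) + (Q:ℝ)) ^ ((1:ℝ) / 2)) *
          ((1 + 1/ε) * (1 + 1/ε))
        = (Real.sqrt C₀ / (2 * ε) * (1 + 1/ε)^2) *
            ((P:ℝ) ^ (3 * ε / 2) * (Q:ℝ) ^ (3 * ε / 2) * ((P:ℝ)+Q) ^ ((1:ℝ)/2)) := by
          ring
      _ ≤ (Real.sqrt C₀ / (2 * ε) * (1 + 1/ε)^2) *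
            (((P:ℝ) * Q) ^ ε * ((P:ℝ)+Q) ^ ((1:ℝ)/2 + ε)) :=
          mul_le_mul_of_nonneg_left hfinal (by positivity)
      _ ≤ (1 + Real.sqrt C₀ / (2*ε) * (1 + 1/ε)^2) *
            (((P:ℝ) * Q) ^ ε * ((P:ℝ)+Q) ^ ((1:ℝ)/2 + ε)) := by
          refine mul_le_mul_of_nonneg_right ?_ (by positivity)
          linarith
      _ = (1 + Real.sqrt C₀ / (2*ε) * (1 + 1/ε)^2) * ((P:ℝ) * Q) ^ ε
            * ((P:ℝ)+Q) ^ ((1:ℝ)/2 + ε) := by ring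
  · -- trivial case : 1/2 ≤ ε
    push_neg at hε2
    have hexp : (0:ℝ) ≤ -(1:ℝ)/2 + ε := by linarith
    have step1 : ‖∑ m ∈ (Finset.Icc 1 P).filter (fun m => m % 2 = 1),
          ∑ n ∈ (Finset.Icc 1 Q).filter (fun n => n % 2 = 1),
            a m * b n * (jacobiSym (sqfKernel n : ℤ) m : ℂ)‖
        ≤ ∑ m ∈ (Finset.Icc 1 P).filter (fun m => m % 2 = 1),
          ∑ n ∈ (Finset.Icc 1 Q).filter (fun n => n % 2 = 1),
            (P:ℝ) ^ (-(1:ℝ)/2 + ε) * (Q:ℝ) ^ (-(1:ℝ)/2 + ε) := by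
      refine (norm_sum_le _ _).trans (Finset.sum_le_sum (fun m hm => ?_))
      refine (norm_sum_le _ _).trans (Finset.sum_le_sum (fun n hn => ?_))
      rw [Finset.mem_filter, Finset.mem_Icc] at hm hn
      rw [norm_mul, norm_mul]
      have h1 : ‖a m‖ ≤ (P:ℝ) ^ (-(1:ℝ)/2 + ε) :=
        (ha m hm.1.1).trans (Real.rpow_le_rpow (Nat.cast_nonneg _)
          (by exact_mod_cast hm.1.2) hexp)
      have h2 : ‖b n‖ ≤ (Q:ℝ) ^ (-(1:ℝ)/2 + ε) :=
        (hb n hn.1.1).trans (Real.rpow_le_rpow (Nat.cast_nonneg _)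
          (by exact_mod_cast hn.1.2) hexp)
      calc ‖a m‖ * ‖b n‖ * ‖((jacobiSym (sqfKernel n : ℤ) m : ℤ) : ℂ)‖
          ≤ ‖a m‖ * ‖b n‖ * 1 := by
            refine mul_le_mul_of_nonneg_left (norm_jacobi_le_one _ _) (by positivity)
        _ = ‖a m‖ * ‖b n‖ := by ring
        _ ≤ (P:ℝ) ^ (-(1:ℝ)/2 + ε) * (Q:ℝ) ^ (-(1:ℝ)/2 + ε) :=
            mul_le_mul h1 h2 (norm_nonneg _) (by positivity)
    have cardP : ((Finset.Icc 1 P).filter (fun m => m % 2 = 1)).card ≤ P := by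
      refine le_trans (Finset.card_filter_le _ _) (by simp)
    have cardQ : ((Finset.Icc 1 Q).filter (fun n => n % 2 = 1)).card ≤ Q := by
      refine le_trans (Finset.card_filter_le _ _) (by simp)
    have step2 : ∑ m ∈ (Finset.Icc 1 P).filter (fun m => m % 2 = 1),
          ∑ n ∈ (Finset.Icc 1 Q).filter (fun n => n % 2 = 1),
            (P:ℝ) ^ (-(1:ℝ)/2 + ε) * (Q:ℝ) ^ (-(1:ℝ)/2 + ε)
        ≤ (P:ℝ) * Q * ((P:ℝ) ^ (-(1:ℝ)/2 + ε) * (Q:ℝ) ^ (-(1:ℝ)/2 + ε)) := by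
      rw [Finset.sum_const, Finset.sum_const, nsmul_eq_mul, nsmul_eq_mul, ← mul_assoc]
      refine mul_le_mul_of_nonneg_right ?_ (by positivity)
      refine mul_le_mul ?_ ?_ (by positivity) (by positivity)
      · exact_mod_cast cardP
      · exact_mod_cast cardQ
    have step3 : (P:ℝ) * Q * ((P:ℝ) ^ (-(1:ℝ)/2 + ε) * (Q:ℝ) ^ (-(1:ℝ)/2 + ε))
        ≤ ((P:ℝ) * Q) ^ ε * ((P:ℝ) + Q) ^ ((1:ℝ)/2 + ε) := by
      have e1 : (P:ℝ) * (P:ℝ) ^ (-(1:ℝ)/2 + ε) = (P:ℝ) ^ ((1:ℝ)/2 + ε) := by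
        nth_rewrite 1 [← Real.rpow_one (P:ℝ)]
        rw [← Real.rpow_add hP0]
        congr 1
        ring
      have e2 : (Q:ℝ) * (Q:ℝ) ^ (-(1:ℝ)/2 + ε) = (Q:ℝ) ^ ((1:ℝ)/2 + ε) := by
        nth_rewrite 1 [← Real.rpow_one (Q:ℝ)]
        rw [← Real.rpow_add hQ0]
        congr 1
        ring
      have e3 : (P:ℝ) * Q * ((P:ℝ) ^ (-(1:ℝ)/2 + ε) * (Q:ℝ) ^ (-(1:ℝ)/2 + ε))
          = ((P:ℝ) * Q) ^ ((1:ℝ)/2 + ε) := by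
        rw [Real.mul_rpow hP0.le hQ0.le, ← e1, ← e2]
        ring
      rw [e3]
      have e4 : ((P:ℝ) * Q) ^ ((1:ℝ)/2 + ε)
          = ((P:ℝ) * Q) ^ ε * ((P:ℝ) * Q) ^ ((1:ℝ)/2) := by
        rw [← Real.rpow_add (by positivity)]
        congr 1
        ring
      rw [e4]
      refine mul_le_mul_of_nonneg_left ?_ (by positivity)
      refine hgeo.trans ?_
      nth_rewrite 1 [← Real.rpow_one ((P:ℝ) + Q)]
      exact Real.rpow_le_rpow_of_exponent_le hPQ1 (by linarith)
    calc ‖∑ m ∈ (Finset.Icc 1 P).filter (fun m => m % 2 = 1),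
          ∑ n ∈ (Finset.Icc 1 Q).filter (fun n => n % 2 = 1),
            a m * b n * (jacobiSym (sqfKernel n : ℤ) m : ℂ)‖
        ≤ ((P:ℝ) * Q) ^ ε * ((P:ℝ) + Q) ^ ((1:ℝ)/2 + ε) :=
          step1.trans (step2.trans step3)
      _ ≤ (1 + Real.sqrt C₀ / (2*ε) * (1 + 1/ε)^2) * (((P:ℝ) * Q) ^ ε
            * ((P:ℝ) + Q) ^ ((1:ℝ)/2 + ε)) := by
          refine le_mul_of_one_le_left (by positivity) ?_
          have h9 : (0:ℝ) ≤ Real.sqrt C₀ / (2*ε) * (1 + 1/ε)^2 := by positivity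
          linarith
      _ = (1 + Real.sqrt C₀ / (2*ε) * (1 + 1/ε)^2) * ((P:ℝ) * Q) ^ ε
            * ((P:ℝ) + Q) ^ ((1:ℝ)/2 + ε) := by ring
end
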